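/- arXiv:1807.00291 — 7 statements merged into one kernel-verified Lean document; each statement's English description precedes it below -/
import Mathlib

section
/- Let R be a commutative noetherian ring with total quotient ring Q, and let M be an R-submodule of Q containing a non-zerodivisor of R. Then the trace ideal tr_R(M) equals (R : M)·M, the R-submodule of Q generated by products xy with x ∈ R : M and y ∈ M. -/
universe u

open nonZeroDivisors

/-- The trace ideal of an `R`-module `M`. -/
def traceIdeal (R : Type*) [CommRing R] (M : Type*) [AddCommGroup M] [Module R M] :
    Ideal R :=
  Submodule.span R {r | ∃ (f : M →ₗ[R] R) (m : M), f m = r}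

lemma key_lemma (R : Type u) [CommRing R] (M : Submodule R (FractionRing R))
    (f : M →ₗ[R] R) (x y : M) :
    algebraMap R (FractionRing R) (f x) * (y : FractionRing R) =
      algebraMap R (FractionRing R) (f y) * (x : FractionRing R) := by
  set Q := FractionRing R
  obtain ⟨⟨a, s⟩, hx⟩ := IsLocalization.surj R⁰ (x : Q)
  obtain ⟨⟨b, t⟩, hy⟩ := IsLocalization.surj R⁰ (y : Q)
  have hsc : ((t : R) * a) • y = ((s : R) * b) • x := by
    apply Subtype.ext
    show ((t : R) * a) • (y : Q) = ((s : R) * b) • (x : Q)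
    rw [Algebra.smul_def, Algebra.smul_def, map_mul, map_mul]
    calc algebraMap R Q t * algebraMap R Q a * (y:Q)
        = algebraMap R Q t * ((x:Q) * algebraMap R Q s) * (y:Q) := by rw [hx]
      _ = algebraMap R Q s * ((y:Q) * algebraMap R Q t) * (x:Q) := by ring
      _ = algebraMap R Q s * algebraMap R Q b * (x:Q) := by rw [hy]
  have hf := congrArg f hsc
  rw [map_smul, map_smul, smul_eq_mul, smul_eq_mul] at hf
  have hu : IsUnit (algebraMap R Q ((s : R) * (t : R))) := by
    have := IsLocalization.map_units Q (s * t)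
    simpa using this
  refine hu.mul_left_cancel ?_
  have e1 : algebraMap R Q ((s:R) * (f x * b)) =
      algebraMap R Q ((s:R) * (t:R)) * (algebraMap R Q (f x) * (y:Q)) := by
    rw [map_mul, map_mul, map_mul, ← hy]; ring
  have e2 : algebraMap R Q ((t:R) * (f y * a)) =
      algebraMap R Q ((s:R) * (t:R)) * (algebraMap R Q (f y) * (x:Q)) := by
    rw [map_mul, map_mul, map_mul, ← hx]; ring
  rw [← e1, ← e2]
  congr 1
  linear_combination -hf

/-- For a submodule `M` of the total quotient ring containing a non-zerodivisor,
`tr_R(M) = (R : M) · M` as submodules of `Q`.  Here `R` corresponds to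
`1 : Submodule R Q` and `(R : M) = 1 / M`. -/
theorem trace_eq_colon_mul (R : Type u) [CommRing R] [IsNoetherianRing R]
    (M : Submodule R (FractionRing R))
    (h : ∃ c ∈ R⁰, algebraMap R (FractionRing R) c ∈ M) :
    Submodule.map (Algebra.linearMap R (FractionRing R)) (traceIdeal R M) =
      (1 / M) * M := by
  set Q := FractionRing R
  set ι := Algebra.linearMap R Q with hι
  obtain ⟨c, hc, hcM⟩ := h
  set xc : M := ⟨algebraMap R Q c, hcM⟩ with hxc
  have hcu : IsUnit (algebraMap R Q c) := IsLocalization.map_units Q ⟨c, hc⟩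
  obtain ⟨u, hu⟩ := hcu
  apply le_antisymm
  · rw [traceIdeal, Submodule.map_span]
    rw [Submodule.span_le]
    rintro _ ⟨r, ⟨f, m, rfl⟩, rfl⟩
    -- show ι (f m) ∈ (1/M) * M
    have hq : (algebraMap R Q (f xc) * (↑u⁻¹ : Q)) ∈ 1 / M := by
      rw [Submodule.mem_div_iff_forall_mul_mem]
      intro y hy
      have := key_lemma R M f xc ⟨y, hy⟩
      have : algebraMap R Q (f xc) * (↑u⁻¹ : Q) * y
          = algebraMap R Q (f ⟨y, hy⟩) := by
        calc algebraMap R Q (f xc) * (↑u⁻¹ : Q) * y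
            = algebraMap R Q (f xc) * y * (↑u⁻¹ : Q) := by ring
          _ = algebraMap R Q (f ⟨y, hy⟩) * (xc : Q) * (↑u⁻¹ : Q) := by rw [this]
          _ = algebraMap R Q (f ⟨y, hy⟩) * ((u : Q) * (↑u⁻¹ : Q)) := by rw [hxc]; simp [hu]; ring
          _ = algebraMap R Q (f ⟨y, hy⟩) := by simp
      rw [this]
      exact Submodule.mem_one.mpr ⟨f ⟨y, hy⟩, rfl⟩
    have hval : ι (f m) = (algebraMap R Q (f xc) * (↑u⁻¹ : Q)) * (m : Q) := by
      have hk := key_lemma R M f m xc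
      calc (ι (f m) : Q) = algebraMap R Q (f m) * ((u : Q) * (↑u⁻¹ : Q)) := by simp [hι]
        _ = algebraMap R Q (f m) * (xc : Q) * (↑u⁻¹ : Q) := by rw [hxc]; simp [hu]; ring
        _ = algebraMap R Q (f xc) * (m : Q) * (↑u⁻¹ : Q) := by rw [← hk]
        _ = (algebraMap R Q (f xc) * (↑u⁻¹ : Q)) * (m : Q) := by ring
    rw [hval]
    exact Submodule.mul_mem_mul hq m.2
  · rw [Submodule.mul_le]
    intro q hq m hm
    have hinj : Function.Injective ι := IsFractionRing.injective R Q
    -- g : M →ₗ[R] Q, x ↦ q * x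
    set g : M →ₗ[R] Q := (LinearMap.mulLeft R q).comp M.subtype with hg
    have hrange : ∀ x : M, g x ∈ LinearMap.range ι := by
      intro x
      have : q * (x : Q) ∈ (1 : Submodule R Q) :=
        (Submodule.mem_div_iff_forall_mul_mem.mp hq) x x.2
      obtain ⟨r, hr⟩ := Submodule.mem_one.mp this
      exact ⟨r, hr⟩
    set f : M →ₗ[R] R :=
      (LinearEquiv.ofInjective ι hinj).symm.toLinearMap.comp
        (g.codRestrict (LinearMap.range ι) hrange) with hf
    have hfι : ∀ x : M, ι (f x) = q * (x : Q) := by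
      intro x
      have : (LinearEquiv.ofInjective ι hinj) (f x) =
          (g.codRestrict (LinearMap.range ι) hrange) x := by
        simp [hf]
      have h2 := congrArg (Subtype.val) this
      simpa [LinearEquiv.ofInjective_apply, hg] using h2
    refine ⟨f ⟨m, hm⟩, ?_, hfι ⟨m, hm⟩⟩
    exact Submodule.subset_span ⟨f, ⟨m, hm⟩, rfl⟩
end

section
/- Let R be a commutative noetherian ring with total quotient ring Q, and let M be an R-submodule of Q containing a non-zerodivisor of R. Then M = tr_R(M) (as subsets of Q) if and only if (M : M) = (R : M) (as subsets of Q). -/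
universe u

open nonZeroDivisors

section aux

variable {R : Type u} [CommRing R]

local notation "Q" => FractionRing R
local notation "alg" => algebraMap R (FractionRing R)

lemma key_symm (M : Submodule R (FractionRing R)) (f : M →ₗ[R] R) (x y : M) :
    alg (f x) * (y : Q) = alg (f y) * (x : Q) := by
  obtain ⟨⟨a, s⟩, hx⟩ := IsLocalization.surj (M := R⁰) (S := Q) (x : Q)
  obtain ⟨⟨b, t⟩, hy⟩ := IsLocalization.surj (M := R⁰) (S := Q) (y : Q)
  have hbx : (b • ((s : R) • x) : M) = (a • ((t : R) • y) : M) := by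
    apply Subtype.ext
    have h1 : (↑(b • ((s : R) • x) : M) : Q) = alg b * (alg ↑s * (x : Q)) := by
      simp [Algebra.smul_def]
    have h2 : (↑(a • ((t : R) • y) : M) : Q) = alg a * (alg ↑t * (y : Q)) := by
      simp [Algebra.smul_def]
    rw [h1, h2]
    linear_combination (alg b) * hx - (alg a) * hy
  have hR := congrArg f hbx
  rw [map_smul, map_smul, map_smul, map_smul, smul_eq_mul, smul_eq_mul,
    smul_eq_mul, smul_eq_mul] at hR
  have hR' := congrArg alg hR
  simp only [map_mul] at hR'
  refine ((IsLocalization.map_units Q s).mul (IsLocalization.map_units Q t)).mul_left_cancel ?_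
  linear_combination (alg ↑s * alg (f x)) * hy - (alg ↑t * alg (f y)) * hx + hR'

lemma trace_map_eq (M : Submodule R (FractionRing R)) (h : ∃ c ∈ R⁰, alg c ∈ M) :
    Submodule.map (Algebra.linearMap R (FractionRing R)) (traceIdeal R M) = 1 / M * M := by
  obtain ⟨c, hc, hcM⟩ := h
  have hcu : IsUnit (alg c) := IsLocalization.map_units Q ⟨c, hc⟩
  set u : M := ⟨alg c, hcM⟩ with hu
  have hcv : alg c * ↑hcu.unit⁻¹ = 1 := by
    exact hcu.mul_val_inv
  apply le_antisymm
  · rw [traceIdeal, Submodule.map_span, Submodule.span_le]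
    rintro q ⟨r, ⟨f, m, rfl⟩, rfl⟩
    have hq : alg (f u) * ↑hcu.unit⁻¹ ∈ 1 / M := by
      rw [Submodule.mem_div_iff_forall_mul_mem]
      intro z hz
      have hk := key_symm M f ⟨z, hz⟩ u
      have hcoe : (↑u : Q) = alg c := rfl
      rw [hcoe] at hk
      have h1 : alg (f u) * ↑hcu.unit⁻¹ * z = alg (f ⟨z, hz⟩) := by
        calc alg (f u) * ↑hcu.unit⁻¹ * z = (alg (f u) * z) * ↑hcu.unit⁻¹ := by ring
          _ = (alg (f ⟨z, hz⟩) * alg c) * ↑hcu.unit⁻¹ := by rw [← hk]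
          _ = alg (f ⟨z, hz⟩) * (alg c * ↑hcu.unit⁻¹) := by ring
          _ = alg (f ⟨z, hz⟩) := by rw [hcv, mul_one]
      rw [h1]
      exact Submodule.algebraMap_mem _
    have hk := key_symm M f m u
    have hcoe : (↑u : Q) = alg c := rfl
    rw [hcoe] at hk
    have heq : (Algebra.linearMap R Q) (f m) = (alg (f u) * ↑hcu.unit⁻¹) * ↑m := by
      rw [Algebra.linearMap_apply]
      calc alg (f m) = alg (f m) * (alg c * ↑hcu.unit⁻¹) := by rw [hcv, mul_one]
        _ = (alg (f m) * alg c) * ↑hcu.unit⁻¹ := by ring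
        _ = (alg (f u) * ↑m) * ↑hcu.unit⁻¹ := by rw [hk]
        _ = (alg (f u) * ↑hcu.unit⁻¹) * ↑m := by ring
    rw [SetLike.mem_coe, heq]
    exact Submodule.mul_mem_mul hq m.2
  · rw [Submodule.mul_le]
    intro q hq m hm
    have hinj : Function.Injective (Algebra.linearMap R Q) :=
      IsFractionRing.injective R Q
    set e := LinearEquiv.ofInjective (Algebra.linearMap R Q) hinj with he
    have hrange : ∀ x : M, ((LinearMap.mulLeft R q).comp M.subtype) x ∈
        LinearMap.range (Algebra.linearMap R Q) := by
      intro x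
      have : q * ↑x ∈ (1 : Submodule R Q) :=
        Submodule.mem_div_iff_forall_mul_mem.mp hq ↑x x.2
      rwa [Submodule.one_eq_range] at this
    set g := LinearMap.codRestrict (LinearMap.range (Algebra.linearMap R Q))
      ((LinearMap.mulLeft R q).comp M.subtype) hrange with hg
    set f := (e.symm : _ →ₗ[R] R).comp g with hfdef
    have hf : ∀ x : M, alg (f x) = q * (x : Q) := by
      intro x
      have h2 : (↑(e (f x)) : Q) = ↑(g x) := congrArg Subtype.val (e.apply_symm_apply (g x))
      rw [he, LinearEquiv.ofInjective_apply] at h2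
      simpa [hg, Algebra.linearMap_apply] using h2
    have : q * m = Algebra.linearMap R Q (f ⟨m, hm⟩) := by
      rw [Algebra.linearMap_apply, hf ⟨m, hm⟩]
    rw [this, traceIdeal, Submodule.map_span]
    exact Submodule.subset_span ⟨f ⟨m, hm⟩, ⟨f, ⟨m, hm⟩, rfl⟩, rfl⟩

end aux

/-- For a submodule `M` of the total quotient ring containing a non-zerodivisor,
`M = tr_R(M)` in `Q` if and only if `(M : M) = (R : M)` in `Q`. -/
theorem self_trace_iff_colon_eq (R : Type u) [CommRing R] [IsNoetherianRing R]
    (M : Submodule R (FractionRing R))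
    (h : ∃ c ∈ R⁰, algebraMap R (FractionRing R) c ∈ M) :
    Submodule.map (Algebra.linearMap R (FractionRing R)) (traceIdeal R M) = M ↔
      M / M = 1 / M := by
  rw [trace_map_eq M h]
  constructor
  · intro htr
    apply le_antisymm
    · intro q hq
      rw [Submodule.mem_div_iff_forall_mul_mem] at hq ⊢
      intro m hm
      rw [← htr] at hm
      refine Submodule.mul_induction_on hm ?_ ?_
      · intro x hx y hy
        have hxy : q * (x * y) = x * (q * y) := by ring
        rw [hxy]
        exact Submodule.mem_div_iff_forall_mul_mem.mp hx _ (hq y hy)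
      · intro a b ha hb
        rw [mul_add]
        exact add_mem ha hb
    · intro q hq
      rw [Submodule.mem_div_iff_forall_mul_mem]
      intro m hm
      rw [← htr]
      exact Submodule.mul_mem_mul hq hm
  · intro hcol
    have h1 : (1 : FractionRing R) ∈ 1 / M := by
      rw [← hcol, Submodule.mem_div_iff_forall_mul_mem]
      intro m hm
      rwa [one_mul]
    apply le_antisymm
    · refine Submodule.mul_le.mpr fun x hx y hy => ?_
      rw [← hcol] at hx
      exact Submodule.mem_div_iff_forall_mul_mem.mp hx y hy
    · intro m hm
      have := Submodule.mul_mem_mul h1 hm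
      rwa [one_mul] at this
end

section
/- Let R be a commutative noetherian ring satisfying the Lindo–Pande condition (every ideal of R is isomorphic as an R-module to a trace ideal of R). Then the Picard group of R is trivial, i.e., every invertible R-module is isomorphic to R. -/
universe u

/-- An ideal is a trace ideal if it is the trace of some module. -/
def IsTraceIdeal {R : Type u} [CommRing R] (I : Ideal R) : Prop :=
  ∃ (M : Type u) (_ : AddCommGroup M) (_ : Module R M), I = traceIdeal R M

/-- The Lindo–Pande condition: every ideal is isomorphic to a trace ideal. -/
def LP (R : Type u) [CommRing R] : Prop :=
  ∀ I : Ideal R, ∃ J : Ideal R, IsTraceIdeal J ∧ Nonempty (I ≃ₗ[R] J)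

/-- An invertible module: finitely generated and locally free of rank one at every prime. -/
def IsInvertibleModule (R : Type u) [CommRing R] (M : Type u) [AddCommGroup M]
    [Module R M] : Prop :=
  Module.Finite R M ∧ ∀ (p : Ideal R) [p.IsPrime],
    Nonempty (LocalizedModule p.primeCompl M ≃ₗ[Localization p.primeCompl]
      Localization p.primeCompl)

namespace LPAux

variable {R : Type u} [CommRing R]

section LocalGlobal

variable {M : Type u} [AddCommGroup M] [Module R M]

/-- An element which vanishes in every localization at a maximal ideal is zero. -/
lemma eq_zero_of_loc (x : M)
    (hx : ∀ (m : Ideal R) (hm : m.IsMaximal),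
      (LocalizedModule.mk x 1 :
        LocalizedModule (@Ideal.primeCompl R _ m hm.isPrime) M) = 0) : x = 0 := by
  by_contra hx0
  have hann : (LinearMap.ker (LinearMap.toSpanSingleton R M x) : Ideal R) ≠ ⊤ := by
    intro ht
    have h1 : (1 : R) ∈ LinearMap.ker (LinearMap.toSpanSingleton R M x) := by
      rw [ht]; trivial
    rw [LinearMap.mem_ker, LinearMap.toSpanSingleton_apply, one_smul] at h1
    exact hx0 h1
  obtain ⟨m, hm, hle⟩ := Ideal.exists_le_maximal _ hann
  haveI := hm.isPrime
  have h0 : (LocalizedModule.mk x 1 : LocalizedModule m.primeCompl M)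
      = LocalizedModule.mk 0 1 := (hx m hm).trans (LocalizedModule.zero_mk 1).symm
  obtain ⟨u, hu⟩ := LocalizedModule.mk_eq.mp h0
  have hux : (u : R) • x = 0 := by rw [← Submonoid.smul_def]; simpa using hu
  have : (u : R) ∈ m := hle (by rwa [LinearMap.mem_ker, LinearMap.toSpanSingleton_apply])
  exact u.2 this

end LocalGlobal

section Scalar

variable (S : Submonoid R) {M : Type u} [AddCommGroup M] [Module R M]

/-- The canonical isomorphism `LocalizedModule S R ≃ Localization S`. -/
noncomputable def cIso : LocalizedModule S R ≃ₗ[R] Localization S :=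
  IsLocalizedModule.iso S (Algebra.linearMap R (Localization S))

lemma cIso_mk_one (r : R) :
    cIso S (LocalizedModule.mk r 1) = algebraMap R (Localization S) r := by
  have h := IsLocalizedModule.iso_symm_apply' S (Algebra.linearMap R (Localization S))
    (algebraMap R (Localization S) r) r 1 (by simp)
  unfold cIso
  rw [← h, LinearEquiv.apply_symm_apply]

/-- Key local computation: any linear functional on a module whose localization is
free of rank one acts, after localization, as multiplication by a fixed scalar. -/
lemma exists_scalar (e : LocalizedModule S M ≃ₗ[R] Localization S)
    (φ : M →ₗ[R] R) :
    ∃ b : Localization S, ∀ x : M,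
      algebraMap R (Localization S) (φ x) = e (LocalizedModule.mk x 1) * b := by
  classical
  let ψ : LocalizedModule S M →ₗ[R] LocalizedModule S R :=
    IsLocalizedModule.map S (LocalizedModule.mkLinearMap S M)
      (LocalizedModule.mkLinearMap S R) φ
  let β : Localization S →ₗ[R] Localization S :=
    (cIso S).toLinearMap ∘ₗ ψ ∘ₗ e.symm.toLinearMap
  let βA : Localization S →ₗ[Localization S] Localization S :=
    β.extendScalarsOfIsLocalization S (Localization S)
  refine ⟨β 1, fun x => ?_⟩
  have h1 : ψ (LocalizedModule.mk x 1) = LocalizedModule.mk (φ x) 1 := by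
    have h := IsLocalizedModule.map_apply S (LocalizedModule.mkLinearMap S M)
      (LocalizedModule.mkLinearMap S R) φ x
    simpa [LocalizedModule.mkLinearMap_apply] using h
  have h2 : algebraMap R (Localization S) (φ x) = β (e (LocalizedModule.mk x 1)) := by
    simp only [β, LinearMap.comp_apply, LinearEquiv.coe_toLinearMap,
      LinearEquiv.symm_apply_apply]
    rw [h1, ← cIso_mk_one S (φ x)]
  have h3 : β (e (LocalizedModule.mk x 1)) = e (LocalizedModule.mk x 1) * β 1 := by
    have hβA : ∀ z : Localization S, βA z = β z := fun z => rfl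
    rw [← hβA, ← hβA 1]
    calc βA (e (LocalizedModule.mk x 1)) = βA (e (LocalizedModule.mk x 1) • (1 : Localization S)) := by
          rw [smul_eq_mul, mul_one]
      _ = e (LocalizedModule.mk x 1) • βA 1 := by rw [map_smul]
      _ = e (LocalizedModule.mk x 1) * βA 1 := by rw [smul_eq_mul]
  rw [h2, h3]

end Scalar

section Trace

variable {M : Type u} [AddCommGroup M] [Module R M]

lemma trace_eq_top [IsNoetherianRing R] [Module.Finite R M]
    (hloc : ∀ (p : Ideal R) [p.IsPrime],
      Nonempty (LocalizedModule p.primeCompl M ≃ₗ[Localization p.primeCompl]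
        Localization p.primeCompl)) :
    traceIdeal R M = ⊤ := by
  by_contra hne
  obtain ⟨m, hm, hle⟩ := Ideal.exists_le_maximal _ hne
  haveI := hm.isPrime
  obtain ⟨e0⟩ := hloc m
  set S := m.primeCompl
  let e : LocalizedModule S M ≃ₗ[R] Localization S := e0.restrictScalars R
  haveI : Module.FinitePresentation R M := Module.finitePresentation_of_finite R M
  set fM := LocalizedModule.mkLinearMap S M with hfM
  set fR := LocalizedModule.mkLinearMap S R with hfR
  let y : LocalizedModule S M →ₗ[R] LocalizedModule S R :=
    (cIso S).symm.toLinearMap ∘ₗ e.toLinearMap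
  obtain ⟨⟨φ, s⟩, hs⟩ := IsLocalizedModule.surj S (IsLocalizedModule.map S fM fR) y
  have hsurj : Function.Surjective (IsLocalizedModule.map S fM fR φ) := by
    rw [← hs]
    intro z
    have hu := IsLocalizedModule.map_units fR s
    rw [Module.End.isUnit_iff] at hu
    obtain ⟨w, hw⟩ := hu.2 z
    refine ⟨e.symm (cIso S w), ?_⟩
    have hyw : y (e.symm (cIso S w)) = w := by
      simp [y, LinearEquiv.symm_apply_apply, LinearEquiv.apply_symm_apply]
    rw [LinearMap.smul_apply, hyw]
    rw [Module.algebraMap_end_apply] at hw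
    exact hw
  obtain ⟨z, hz⟩ := hsurj (LocalizedModule.mk 1 1)
  obtain ⟨⟨x, tden⟩, rfl⟩ := IsLocalizedModule.mk'_surjective S fM z
  simp only [Function.uncurry_apply_pair] at hz
  rw [IsLocalizedModule.map_mk'] at hz
  rw [← IsLocalizedModule.mk_eq_mk'] at hz
  obtain ⟨u, hu⟩ := LocalizedModule.mk_eq.mp hz
  simp only [Submonoid.smul_def, smul_eq_mul, OneMemClass.coe_one, one_mul, mul_one] at hu
  have hmem : φ x ∈ traceIdeal R M := Submodule.subset_span ⟨φ, x, rfl⟩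
  have hL : (u : R) * φ x ∈ m := Ideal.mul_mem_left _ _ (hle hmem)
  rw [hu] at hL
  rcases hm.isPrime.mem_or_mem hL with hcase | hcase
  · exact u.2 hcase
  · exact tden.2 hcase

/-- Any linear functional on a trace ideal takes values in the trace ideal. -/
lemma trace_closed {N : Type u} [AddCommGroup N] [Module R N]
    (g : (traceIdeal R N : Submodule R R) →ₗ[R] R) (y : traceIdeal R N) :
    g y ∈ traceIdeal R N := by
  obtain ⟨y, hy⟩ := y
  refine Submodule.span_induction (p := fun z hz => g ⟨z, hz⟩ ∈ traceIdeal R N)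
    ?_ ?_ ?_ ?_ hy
  · rintro z ⟨f, nn, rfl⟩
    let f' : N →ₗ[R] (traceIdeal R N : Submodule R R) :=
      f.codRestrict _ (fun a => Submodule.subset_span ⟨f, a, rfl⟩)
    exact Submodule.subset_span ⟨g ∘ₗ f', nn, rfl⟩
  · show g 0 ∈ traceIdeal R N
    rw [map_zero]
    exact Submodule.zero_mem _
  · intro a b ha hb hga hgb
    show g (⟨a, ha⟩ + ⟨b, hb⟩) ∈ traceIdeal R N
    rw [map_add]
    exact Submodule.add_mem _ hga hgb
  · intro r a ha hga
    show g (r • ⟨a, ha⟩) ∈ traceIdeal R N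
    rw [map_smul]
    exact Submodule.smul_mem _ _ hga

end Trace

section Avoid

/-- The submodule of functionals with values in an ideal `p`. -/
def valIn {M : Type u} [AddCommGroup M] [Module R M] (p : Ideal R) :
    Submodule R (M →ₗ[R] R) where
  carrier := {φ | ∀ x, φ x ∈ p}
  add_mem' := fun ha hb x => by simpa using p.add_mem (ha x) (hb x)
  zero_mem' := fun x => by simp
  smul_mem' := fun r φ hφ x => by
    simpa [smul_eq_mul] using Ideal.mul_mem_left p r (hφ x)

lemma mem_valIn {M : Type u} [AddCommGroup M] [Module R M] {p : Ideal R}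
    {φ : M →ₗ[R] R} : φ ∈ valIn p ↔ ∀ x, φ x ∈ p := Iff.rfl

/-- Prime avoidance for families of submodules indexed by primes. -/
lemma avoid {H : Type*} [AddCommGroup H] [Module R H] (N : Ideal R → Submodule R H)
    (hmul : ∀ (p : Ideal R) (r : R) (φ : H), r ∈ p → r • φ ∈ N p)
    (hdiv : ∀ (p : Ideal R), p.IsPrime → ∀ (r : R) (φ : H), r ∉ p → r • φ ∈ N p → φ ∈ N p) :
    ∀ (P : Finset (Ideal R)), (∀ p ∈ P, p.IsPrime) → (∀ p ∈ P, ∃ φ, φ ∉ N p) →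
      ∃ φ, ∀ p ∈ P, φ ∉ N p := by
  classical
  intro P
  induction P using Finset.strongInduction with
  | _ P ih =>
    intro hP hne
    rcases P.eq_empty_or_nonempty with rfl | hPne
    · exact ⟨0, by simp⟩
    obtain ⟨p₀, hp₀P, hp₀min⟩ := P.exists_minimal hPne
    obtain ⟨φ, hφ⟩ := ih (P.erase p₀) (Finset.erase_ssubset hp₀P)
      (fun p hp => hP p (Finset.mem_of_mem_erase hp))
      (fun p hp => hne p (Finset.mem_of_mem_erase hp))
    by_cases hc : φ ∉ N p₀
    · refine ⟨φ, fun p hp => ?_⟩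
      rcases eq_or_ne p p₀ with rfl | hne'
      · exact hc
      · exact hφ p (Finset.mem_erase.mpr ⟨hne', hp⟩)
    push_neg at hc
    obtain ⟨ψ, hψ⟩ := hne p₀ hp₀P
    have hr : ∃ r, r ∈ (P.erase p₀).inf id ∧ r ∉ p₀ := by
      by_contra hcon
      push_neg at hcon
      have hle : (P.erase p₀).inf id ≤ p₀ := fun r hrr => hcon r hrr
      obtain ⟨q, hq, hqle⟩ := (Ideal.IsPrime.inf_le' (hP p₀ hp₀P)).mp hle
      have hqn : q ≠ p₀ := (Finset.mem_erase.mp hq).1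
      exact hqn (le_antisymm hqle (hp₀min (Finset.mem_of_mem_erase hq) hqle))
    obtain ⟨r, hr1, hr2⟩ := hr
    refine ⟨φ + r • ψ, fun p hp => ?_⟩
    rcases eq_or_ne p p₀ with rfl | hne'
    · intro hmem
      have hsub : r • ψ ∈ N p := by
        have := (N p).sub_mem hmem hc
        simpa using this
      exact hψ (hdiv p (hP p hp) r ψ hr2 hsub)
    · intro hmem
      have hrp : r ∈ p := by
        have := Submodule.mem_finsetInf.mp hr1 p (Finset.mem_erase.mpr ⟨hne', hp⟩)
        simpa using this
      have h1 : r • ψ ∈ N p := hmul p r ψ hrp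
      have h2 : φ ∈ N p := by
        have := (N p).sub_mem hmem h1
        simpa using this
      exact hφ p (Finset.mem_erase.mpr ⟨hne', hp⟩) h2

end Avoid

end LPAux

open LPAux in
/-- If `R` satisfies the Lindo–Pande condition, then the Picard group of `R` is trivial:
every invertible module is free of rank one. -/
theorem picard_trivial_of_LP (R : Type u) [CommRing R] [IsNoetherianRing R] (h : LP R)
    (M : Type u) [AddCommGroup M] [Module R M] (hM : IsInvertibleModule R M) :
    Nonempty (M ≃ₗ[R] R) := by
  classical
  obtain ⟨hfin, hloc⟩ := hM
  -- Step 1: the trace ideal of M is the unit ideal; extract a finite system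
  -- f_i, x_i with ∑ f_i(x_i) = 1.
  have htr : traceIdeal R M = ⊤ := trace_eq_top hloc
  have h1mem : (1 : R) ∈ traceIdeal R M := htr ▸ trivial
  rw [traceIdeal, Submodule.mem_span_set'] at h1mem
  obtain ⟨n, c, g, hcg⟩ := h1mem
  have hg : ∀ i, ∃ (f : M →ₗ[R] R) (x : M), f x = (g i : R) := fun i => (g i).2
  choose f0 x0 hf0 using hg
  set F : Fin n → (M →ₗ[R] R) := fun i => c i • f0 i with hF
  set X : Fin n → M := fun i => x0 i with hX
  have hFX : ∑ i, F i (X i) = 1 := by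
    rw [← hcg]
    refine Finset.sum_congr rfl (fun i _ => ?_)
    simp [hF, hX, hf0 i, smul_eq_mul]
  -- Step 2: key identities proved by localization.
  have hsym : ∀ (φ ψ : M →ₗ[R] R) (x y : M), φ x * ψ y = φ y * ψ x := by
    intro φ ψ x y
    have hd : φ x * ψ y - φ y * ψ x = 0 := by
      apply eq_zero_of_loc (R := R) (M := R)
      intro m hm
      haveI := hm.isPrime
      obtain ⟨e0⟩ := hloc m
      set S := m.primeCompl
      let e : LocalizedModule S M ≃ₗ[R] Localization S := e0.restrictScalars R
      obtain ⟨b, hb⟩ := exists_scalar S e φ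
      obtain ⟨c', hc'⟩ := exists_scalar S e ψ
      apply (cIso S).injective
      rw [cIso_mk_one, map_zero, map_sub, map_mul, map_mul, hb x, hb y, hc' x, hc' y]
      ring
    exact sub_eq_zero.mp hd
  have hE1 : ∀ x : M, ∑ i, (F i x) • X i = x := by
    intro x
    have hd : (∑ i, (F i x) • X i) - x = 0 := by
      apply eq_zero_of_loc (R := R) (M := M)
      intro m hm
      haveI := hm.isPrime
      obtain ⟨e0⟩ := hloc m
      set S := m.primeCompl
      let e : LocalizedModule S M ≃ₗ[R] Localization S := e0.restrictScalars R
      choose b hb using fun i => exists_scalar S e (F i)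
      apply e.injective
      rw [map_zero]
      have hmk : (LocalizedModule.mk ((∑ i, (F i x) • X i) - x) 1 :
          LocalizedModule S M)
          = LocalizedModule.mkLinearMap S M ((∑ i, (F i x) • X i) - x) := rfl
      rw [hmk, map_sub, map_sum]
      simp only [map_smul]
      rw [map_sub, map_sum]
      simp only [map_smul]
      have hterm : ∀ i, (F i x) • e (LocalizedModule.mkLinearMap S M (X i))
          = (e (LocalizedModule.mk x 1) * b i) * e (LocalizedModule.mk (X i) 1) := by
        intro i
        rw [Algebra.smul_def, ← hb i x]
        rfl
      rw [Finset.sum_congr rfl (fun i _ => hterm i)]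
      have hsum1 : ∑ i, e (LocalizedModule.mk (X i) 1 : LocalizedModule S M) * b i = 1 := by
        have := congrArg (algebraMap R (Localization S)) hFX
        rw [map_sum, map_one] at this
        rw [← this]
        exact Finset.sum_congr rfl (fun i _ => (hb i (X i)).symm)
      have : ∑ i, (e (LocalizedModule.mk x 1 : LocalizedModule S M) * b i) *
          e (LocalizedModule.mk (X i) 1 : LocalizedModule S M)
          = e (LocalizedModule.mk x 1 : LocalizedModule S M) *
            ∑ i, e (LocalizedModule.mk (X i) 1 : LocalizedModule S M) * b i := by
        rw [Finset.mul_sum]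
        exact Finset.sum_congr rfl (fun i _ => by ring)
      rw [this, hsum1, mul_one]
      have : LocalizedModule.mkLinearMap S M x = (LocalizedModule.mk x 1 :
          LocalizedModule S M) := rfl
      rw [this, sub_self]
    have := sub_eq_zero.mp hd
    exact this
  -- Step 3: produce an injective functional using Lasker--Noether and prime avoidance.
  obtain ⟨t, ht, hprim⟩ := Ideal.isLasker R R ⊥
  set P : Finset (Ideal R) := t.image Ideal.radical with hP
  have hPprime : ∀ p ∈ P, p.IsPrime := by
    intro p hp
    obtain ⟨Q, hQ, rfl⟩ := Finset.mem_image.mp hp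
    exact Ideal.isPrime_radical (hprim hQ)
  have hNne : ∀ p ∈ P, ∃ φ : M →ₗ[R] R, φ ∉ valIn p := by
    intro p hp
    have hp' := hPprime p hp
    have h1 : (1 : R) ∉ p := fun hh => hp'.ne_top ((Ideal.eq_top_iff_one p).mpr hh)
    by_contra hcon
    push_neg at hcon
    apply h1
    rw [← hFX]
    exact Ideal.sum_mem _ (fun i _ => (hcon (F i)) (X i))
  obtain ⟨φ, hφ⟩ := avoid (valIn) (fun p r ψ hr => by
      intro x
      simpa [smul_eq_mul] using Ideal.mul_mem_right (ψ x) p hr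
      ) (fun p hp r ψ hr hmem => by
      intro x
      have := hmem x
      simp only [LinearMap.smul_apply, smul_eq_mul] at this
      exact (hp.mem_or_mem this).resolve_left hr
      ) P hPprime hNne
  have hinj : Function.Injective φ := by
    rw [← LinearMap.ker_eq_bot]
    rw [LinearMap.ker_eq_bot']
    intro x hx
    by_contra hx0
    have hex : ∃ i, F i x ≠ 0 := by
      by_contra hall
      push_neg at hall
      apply hx0
      rw [← hE1 x]
      simp [hall]
    obtain ⟨i, hi⟩ := hex
    set r := F i x with hr
    have hzero : ∀ y, φ y * r = 0 := by
      intro y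
      have := hsym φ (F i) y x
      rw [hx, zero_mul] at this
      rw [hr, this]
    have hrbot : r ∉ (⊥ : Ideal R) := by simpa using hi
    have hQex : ∃ Q ∈ t, r ∉ Q := by
      by_contra hcon
      push_neg at hcon
      apply hrbot
      rw [← ht]
      exact Submodule.mem_finsetInf.mpr (fun Q hQ => by simpa using hcon Q hQ)
    obtain ⟨Q, hQt, hrQ⟩ := hQex
    have hQ := hprim hQt
    have hmemval : φ ∈ valIn (Ideal.radical Q) := by
      intro y
      have hin : r * φ y ∈ Q := by
        rw [mul_comm, hzero y]
        exact Q.zero_mem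
      exact ((Ideal.isPrimary_iff.mp hQ).2 hin).resolve_left hrQ
    exact hφ (Ideal.radical Q) (Finset.mem_image.mpr ⟨Q, hQt, rfl⟩) hmemval
  -- Step 4: M is isomorphic to an ideal; apply LP and conclude.
  obtain ⟨J, hJtrace, ⟨gJ⟩⟩ := h (LinearMap.range φ)
  obtain ⟨N, iN1, iN2, hJN⟩ := hJtrace
  let ε : M ≃ₗ[R] J := (LinearEquiv.ofInjective φ hinj).trans gJ
  have h1J : (1 : R) ∈ J := by
    rw [← hFX]
    refine Ideal.sum_mem _ (fun i _ => ?_)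
    have hkey : ((F i) ∘ₗ (ε.symm.toLinearMap ∘ₗ
        (LinearEquiv.ofEq J (traceIdeal R N) hJN).symm.toLinearMap))
        ((LinearEquiv.ofEq J (traceIdeal R N) hJN) (ε (X i))) ∈ traceIdeal R N := by
      exact trace_closed _ _
    simp only [LinearMap.comp_apply, LinearEquiv.coe_toLinearMap,
      LinearEquiv.symm_apply_apply] at hkey
    rw [hJN]
    exact hkey
  have hJtop : J = ⊤ := (Ideal.eq_top_iff_one J).mpr h1J
  exact ⟨ε.trans ((LinearEquiv.ofEq _ _ hJtop).trans (Submodule.topEquiv))⟩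
end

section
/- A Dedekind domain R satisfies the Lindo–Pande condition (every ideal of R is isomorphic to a trace ideal of R) if and only if R is a principal ideal domain. -/
universe u
open scoped nonZeroDivisors

section aux
variable {R : Type u} [CommRing R]

lemma mem_traceIdeal {M : Type*} [AddCommGroup M] [Module R M] (f : M →ₗ[R] R) (m : M) :
    f m ∈ traceIdeal R M := Submodule.subset_span ⟨f, m, rfl⟩

/-- The trace of a trace ideal is contained in itself. -/
lemma traceIdeal_trace_le {M : Type u} [AddCommGroup M] [Module R M] :
    traceIdeal R ↥(traceIdeal R M) ≤ traceIdeal R M := by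
  set J := traceIdeal R M with hJ
  apply Submodule.span_le.mpr
  rintro r ⟨f, ⟨x, hx⟩, rfl⟩
  have key : ∀ (x : R) (hx : x ∈ J), f ⟨x, hx⟩ ∈ J := by
    intro x hx
    induction hx using Submodule.span_induction with
    | mem y hy =>
      obtain ⟨g, m, rfl⟩ := hy
      have : f ⟨g m, Submodule.subset_span ⟨g, m, rfl⟩⟩ =
          (f.comp (g.codRestrict J (fun m => mem_traceIdeal g m))) m := rfl
      rw [this]
      exact mem_traceIdeal _ m
    | zero =>
      have : (⟨(0:R), Submodule.zero_mem _⟩ : ↥J) = 0 := rfl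
      rw [this, map_zero]; exact Submodule.zero_mem _
    | add y z hy hz hy' hz' =>
      have : (⟨y + z, Submodule.add_mem _ hy hz⟩ : ↥J) = ⟨y, hy⟩ + ⟨z, hz⟩ := rfl
      rw [this, map_add]; exact Submodule.add_mem _ hy' hz'
    | smul a y hy hy' =>
      have : (⟨a • y, Submodule.smul_mem _ a hy⟩ : ↥J) = a • ⟨y, hy⟩ := rfl
      rw [this, map_smul]; exact Submodule.smul_mem _ a hy'
  exact key x hx

/-- In a Dedekind domain, the trace ideal of a nonzero ideal is the whole ring. -/
lemma traceIdeal_of_ne_bot [IsDomain R] [IsDedekindDomain R] {I : Ideal R} (hI : I ≠ ⊥) :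
    traceIdeal R ↥I = ⊤ := by
  classical
  let K := FractionRing R
  have hinj : Function.Injective (algebraMap R K) := IsFractionRing.injective R K
  have hJ : (I : FractionalIdeal R⁰ K) ≠ 0 := by
    simpa [FractionalIdeal.coeIdeal_eq_zero] using hI
  have h1 : (I : FractionalIdeal R⁰ K) * (I : FractionalIdeal R⁰ K)⁻¹ = 1 :=
    mul_inv_cancel₀ hJ
  set T : Submodule R K := Submodule.map (Algebra.linearMap R K) (traceIdeal R ↥I) with hT
  have hprod : ((I : FractionalIdeal R⁰ K) : Submodule R K) *
      (((I : FractionalIdeal R⁰ K)⁻¹ : FractionalIdeal R⁰ K) : Submodule R K) ≤ T := by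
    apply Submodule.mul_le.mpr
    intro x hx y hy
    obtain ⟨a, ha, rfl⟩ := (FractionalIdeal.mem_coeIdeal _).mp hx
    -- y satisfies: ∀ b ∈ I, y * algebraMap b ∈ 1
    have hy' : ∀ b ∈ I, y * algebraMap R K b ∈ (1 : FractionalIdeal R⁰ K) := by
      intro b hb
      have : y ∈ (1 : FractionalIdeal R⁰ K) / (I : FractionalIdeal R⁰ K) := by
        rwa [← FractionalIdeal.inv_eq]
      exact (FractionalIdeal.mem_div_iff_of_ne_zero hJ).mp this _
        ((FractionalIdeal.mem_coeIdeal _).mpr ⟨b, hb, rfl⟩)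
    -- build linear map f : I →ₗ[R] R with algebraMap (f b) = y * algebraMap b
    let g : ↥I →ₗ[R] K := y • ((Algebra.linearMap R K).comp I.subtype)
    have hrange : ∀ b : ↥I, g b ∈ LinearMap.range (Algebra.linearMap R K) := by
      intro b
      obtain ⟨r, hr⟩ := (FractionalIdeal.mem_one_iff _).mp (hy' b.1 b.2)
      exact ⟨r, hr⟩
    let e := LinearEquiv.ofInjective (Algebra.linearMap R K) hinj
    let f : ↥I →ₗ[R] R := e.symm.toLinearMap.comp (g.codRestrict _ hrange)
    have hf : ∀ b : ↥I, algebraMap R K (f b) = y * algebraMap R K b.1 := by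
      intro b
      have h3 : e (f b) = (g.codRestrict _ hrange) b := e.apply_symm_apply _
      have h2 : (e (f b) : K) = algebraMap R K (f b) := rfl
      have h4 : ((g.codRestrict _ hrange) b : K) = g b := rfl
      have h5 : g b = y * algebraMap R K b.1 := by
        simp [g, smul_eq_mul]
      rw [← h5, ← h4, ← h3, h2]
    have : algebraMap R K a * y = algebraMap R K (f ⟨a, ha⟩) := by
      rw [hf ⟨a, ha⟩]; ring
    rw [this]
    exact ⟨f ⟨a, ha⟩, mem_traceIdeal f _, rfl⟩
  have h1' : (1 : K) ∈ T := by
    apply hprod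
    rw [← FractionalIdeal.coe_mul, h1]
    exact FractionalIdeal.one_mem_one _
  obtain ⟨r, hr, hr1⟩ := h1'
  have : r = 1 := hinj (by simpa using hr1)
  rw [this] at hr
  exact Ideal.eq_top_iff_one _ |>.mpr hr

end aux

/-- A Dedekind domain satisfies the Lindo–Pande condition iff it is a PID. -/
theorem dedekind_LP_iff_pid (R : Type u) [CommRing R] [IsDomain R] [IsDedekindDomain R] :
    LP R ↔ IsPrincipalIdealRing R := by
  constructor
  · intro h
    constructor
    intro I
    by_cases hI : I = ⊥
    · exact ⟨0, by rw [hI, Submodule.span_zero_singleton]⟩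
    obtain ⟨J, ⟨M, _, _, rfl⟩, ⟨e⟩⟩ := h I
    set J := traceIdeal R M with hJdef
    have hJ : J ≠ ⊥ := by
      intro hbot
      apply hI
      apply (Submodule.eq_bot_iff _).mpr
      intro x hx
      have hsub : Subsingleton ↥J := by rw [hbot]; infer_instance
      have : e ⟨x, hx⟩ = e 0 := Subsingleton.elim _ _
      have hx0 : (⟨x, hx⟩ : ↥I) = 0 := e.injective this
      exact congrArg Subtype.val hx0
    have hJtop : J = ⊤ := by
      have h1 : traceIdeal R ↥J = ⊤ := traceIdeal_of_ne_bot hJ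
      have h2 : traceIdeal R ↥J ≤ J := traceIdeal_trace_le
      rw [h1] at h2
      exact top_le_iff.mp h2
    -- I ≃ₗ R
    let φ : ↥I ≃ₗ[R] R :=
      (e.trans (LinearEquiv.ofEq J ⊤ hJtop)).trans (Submodule.topEquiv)
    set a : ↥I := φ.symm 1 with ha
    refine ⟨(a : R), ?_⟩
    apply le_antisymm
    · intro x hx
      have : φ.symm (φ ⟨x, hx⟩) = ⟨x, hx⟩ := φ.symm_apply_apply _
      have h2 : (⟨x, hx⟩ : ↥I) = φ ⟨x, hx⟩ • a := by
        conv_lhs => rw [← this]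
        rw [ha, ← φ.symm.map_smul, smul_eq_mul, mul_one]
      have h3 : x = φ ⟨x, hx⟩ * (a : R) := by
        have := congrArg Subtype.val h2
        simpa [Submodule.coe_smul, smul_eq_mul] using this
      rw [h3]
      exact Ideal.mul_mem_left _ _ (Submodule.mem_span_singleton_self _)
    · exact Submodule.span_le.mpr (Set.singleton_subset_iff.mpr a.2)
  · intro h I
    by_cases hI : I = ⊥
    · refine ⟨⊥, ⟨PUnit.{u+1}, inferInstance, inferInstance, ?_⟩,
        ⟨LinearEquiv.ofEq _ _ (by rw [hI])⟩⟩
      refine (le_antisymm ?_ bot_le).symm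
      apply Submodule.span_le.mpr
      rintro r ⟨f, m, rfl⟩
      have : m = 0 := Subsingleton.elim _ _
      rw [this, map_zero]; exact Submodule.zero_mem _
    · obtain ⟨a, rfl⟩ := (h.principal I).principal
      have ha : a ≠ 0 := by
        intro h0
        apply hI
        rw [h0]
        simp
      refine ⟨⊤, ⟨R, inferInstance, inferInstance, ?_⟩, ?_⟩
      · exact ((Ideal.eq_top_iff_one _).mpr (mem_traceIdeal (LinearMap.id : R →ₗ[R] R) (1 : R))).symm
      · exact ⟨((LinearEquiv.toSpanNonzeroSingleton R R a ha).symm.trans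
          Submodule.topEquiv.symm)⟩
end

section
/- Let R be a commutative noetherian ring with total quotient ring Q, let I be a reflexive ideal of R containing a non-zerodivisor of R, and set S = (I : I), the colon taken in Q. If I = tr_R(I), then I = tr_R(S). Moreover, if additionally S ≅ tr_R(S) as R-modules, then I ≅ S as S-modules. -/
universe u

open nonZeroDivisors

namespace RTLemma

variable {R : Type u} [CommRing R]

local notation "Q" => FractionRing R
local notation "ι" => algebraMap R (FractionRing R)

/-- `R ≃ₗ[R] range (algebraMap R Q)`. -/
noncomputable def A : R ≃ₗ[R] LinearMap.range (Algebra.linearMap R (FractionRing R)) :=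
  LinearEquiv.ofInjective _ (fun a b h => IsFractionRing.injective R (FractionRing R) h)

lemma alg_A_symm (x : Q) (h : x ∈ LinearMap.range (Algebra.linearMap R (FractionRing R))) :
    ι ((A (R := R)).symm ⟨x, h⟩) = x := by
  have h1 := (A (R := R)).apply_symm_apply ⟨x, h⟩
  have h2 := congrArg Subtype.val h1
  rw [show ∀ y : R, ((A (R := R)) y : Q) = ι y from fun y => rfl] at h2
  exact h2

/-- An `R`-linear map to `R` given by multiplication by `p` in `Q`. -/
noncomputable def mulHom (M : Submodule R Q) (p : Q)
    (hp : ∀ x ∈ M, ∃ t : R, ι t = p * x) : M →ₗ[R] R :=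
  (A (R := R)).symm.toLinearMap ∘ₗ LinearMap.codRestrict _
    { toFun := fun x : M => p * (x : Q)
      map_add' := fun x y => by simp [mul_add]
      map_smul' := fun r x => by simp [Algebra.smul_def]; ring }
    (fun x => by obtain ⟨t, ht⟩ := hp x x.2; exact ⟨t, ht⟩)

lemma alg_mulHom (M : Submodule R Q) (p : Q) (hp : ∀ x ∈ M, ∃ t : R, ι t = p * x)
    (x : Q) (hx : x ∈ M) : ι (mulHom M p hp ⟨x, hx⟩) = p * x := by
  exact alg_A_symm (p * x) ⟨(hp x hx).choose, (hp x hx).choose_spec⟩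

/-- Similar, with domain an ideal of `R`. -/
noncomputable def mulHomI (I : Ideal R) (p : Q)
    (hp : ∀ a ∈ I, ∃ t : R, ι t = p * ι a) : I →ₗ[R] R :=
  (A (R := R)).symm.toLinearMap ∘ₗ LinearMap.codRestrict _
    { toFun := fun a : I => p * ι (a : R)
      map_add' := fun x y => by simp [mul_add]
      map_smul' := fun r x => by simp [Algebra.smul_def]; ring }
    (fun a => by obtain ⟨t, ht⟩ := hp a a.2; exact ⟨t, ht⟩)

lemma alg_mulHomI (I : Ideal R) (p : Q) (hp : ∀ a ∈ I, ∃ t : R, ι t = p * ι a)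
    (a : R) (ha : a ∈ I) : ι (mulHomI I p hp ⟨a, ha⟩) = p * ι a := by
  exact alg_A_symm (p * ι a) ⟨(hp a ha).choose, (hp a ha).choose_spec⟩

/-- Every linear map from a submodule of `Q` to `Q` is "multiplication" in a weak sense. -/
lemma mulform (M : Submodule R Q) (g : M →ₗ[R] Q) (c : R) (hc : c ∈ R⁰)
    (hcM : ι c ∈ M) (x : Q) (hx : x ∈ M) :
    g ⟨x, hx⟩ * ι c = x * g ⟨ι c, hcM⟩ := by
  obtain ⟨⟨a, b⟩, hab⟩ := IsLocalization.surj (M := R⁰) (S := Q) x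
  have hbu : IsUnit (ι (b : R)) := IsLocalization.map_units Q b
  have hax : ι a ∈ M := by
    rw [← hab, mul_comm, ← Algebra.smul_def]
    exact M.smul_mem b hx
  have e1 : (⟨ι a, hax⟩ : M) = (b : R) • (⟨x, hx⟩ : M) :=
    Subtype.ext (by rw [SetLike.val_smul, Algebra.smul_def, mul_comm, hab])
  have e2 : c • (⟨ι a, hax⟩ : M) = a • (⟨ι c, hcM⟩ : M) :=
    Subtype.ext (by simp only [SetLike.val_smul, Algebra.smul_def, ← map_mul]; rw [mul_comm])
  have e3 : ι c * g ⟨ι a, hax⟩ = ι a * g ⟨ι c, hcM⟩ := by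
    have h4 := congrArg g e2
    rw [map_smul, map_smul] at h4
    simpa [Algebra.smul_def] using h4
  apply hbu.mul_left_cancel
  calc ι (b : R) * (g ⟨x, hx⟩ * ι c)
      = (g ((b : R) • (⟨x, hx⟩ : M))) * ι c := by rw [map_smul, Algebra.smul_def]; ring
    _ = g ⟨ι a, hax⟩ * ι c := by rw [← e1]
    _ = ι a * g ⟨ι c, hcM⟩ := by rw [mul_comm (g ⟨ι a, hax⟩)]; exact e3
    _ = ι (b : R) * (x * g ⟨ι c, hcM⟩) := by rw [← hab]; ring

lemma hom_identity (I : Ideal R) (f : I →ₗ[R] R) (a c : R) (ha : a ∈ I) (hc : c ∈ I) :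
    ι c * ι (f ⟨a, ha⟩) = ι a * ι (f ⟨c, hc⟩) := by
  have e : c • (⟨a, ha⟩ : I) = a • (⟨c, hc⟩ : I) :=
    Subtype.ext (by simp [smul_eq_mul, mul_comm])
  have h1 := congrArg f e
  rw [map_smul, map_smul] at h1
  rw [← map_mul, ← map_mul]
  exact congrArg ι (by simpa [smul_eq_mul] using h1)

/-- B1 : `(R : J) ⊆ (J : J)` when `tr I = I`. -/
lemma mul_mem_map (I : Ideal R) (htr : traceIdeal R I = I) (p : Q)
    (hp : ∀ a ∈ I, ∃ t : R, ι t = p * ι a) :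
    ∀ a ∈ I, p * ι a ∈ Submodule.map (Algebra.linearMap R (FractionRing R)) I := by
  intro a ha
  have hfI : mulHomI I p hp ⟨a, ha⟩ ∈ I :=
    htr.le (Submodule.subset_span ⟨mulHomI I p hp, ⟨a, ha⟩, rfl⟩)
  exact Submodule.mem_map.mpr ⟨_, hfI, alg_mulHomI I p hp a ha⟩

/-- The functional `f ↦ q * (ι (f c) * v)` on the dual of `I`. -/
noncomputable def Phi (I : Ideal R) (q : Q) (c : R) (hcI : c ∈ I) (v : Q)
    (hq : ∀ f : I →ₗ[R] R, ∃ t : R, ι t = q * (ι (f ⟨c, hcI⟩) * v)) :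
    Module.Dual R (Module.Dual R I) :=
  (A (R := R)).symm.toLinearMap ∘ₗ LinearMap.codRestrict _
    { toFun := fun f : I →ₗ[R] R => q * (ι (f ⟨c, hcI⟩) * v)
      map_add' := fun f g => by simp [LinearMap.add_apply, map_add]; ring
      map_smul' := fun r f => by
        simp [LinearMap.smul_apply, Algebra.smul_def]; ring }
    (fun f => hq f)

lemma alg_Phi (I : Ideal R) (q : Q) (c : R) (hcI : c ∈ I) (v : Q)
    (hq : ∀ f : I →ₗ[R] R, ∃ t : R, ι t = q * (ι (f ⟨c, hcI⟩) * v)) (f : I →ₗ[R] R) :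
    ι (Phi I q c hcI v hq f) = q * (ι (f ⟨c, hcI⟩) * v) := by
  exact alg_A_symm (q * (ι (f ⟨c, hcI⟩) * v)) (hq f)

/-- B2 : reflexivity gives `(R : (R : J)) ⊆ J`. -/
lemma mem_of_double (I : Ideal R) (href : Module.IsReflexive R I)
    (c : R) (hcI : c ∈ I) (v : Q) (hv : ι c * v = 1) (q : Q)
    (hq : ∀ f : I →ₗ[R] R, ∃ t : R, ι t = q * (ι (f ⟨c, hcI⟩) * v)) :
    ∃ a ∈ I, ι a = q := by
  haveI := href
  obtain ⟨a, ha⟩ := (Module.bijective_dual_eval R I).2 (Phi I q c hcI v hq)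
  refine ⟨a, a.2, ?_⟩
  have h1 : (Module.Dual.eval R I a) I.subtype = Phi I q c hcI v hq I.subtype := by rw [ha]
  rw [Module.Dual.eval_apply] at h1
  have h3 := alg_Phi I q c hcI v hq I.subtype
  rw [← h1] at h3
  have h4 : I.subtype ⟨c, hcI⟩ = c := rfl
  rw [h4] at h3
  rw [hv, mul_one] at h3
  exact h3

end RTLemma

/-- Lemma 3.5: let `I` be a reflexive ideal containing a non-zerodivisor with
`I = tr_R(I)`, and let `S = I : I` (colon in the total quotient ring `Q`).  Then
`I = tr_R(S)`; moreover if `S ≅ tr_R(S)` as `R`-modules then `I ≅ S` as `S`-modules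
(an `R`-isomorphism commuting with multiplication by elements of `S`). -/
theorem reflexive_trace_endomorphism_ring (R : Type u) [CommRing R] [IsNoetherianRing R]
    (I : Ideal R) (href : Module.IsReflexive R I) (hnzd : ∃ c ∈ R⁰, c ∈ I)
    (htr : traceIdeal R I = I) :
    traceIdeal R
      ((Submodule.map (Algebra.linearMap R (FractionRing R)) I) /
        (Submodule.map (Algebra.linearMap R (FractionRing R)) I) :
          Submodule R (FractionRing R)) = I ∧
    (Nonempty
        ((((Submodule.map (Algebra.linearMap R (FractionRing R)) I) /
            (Submodule.map (Algebra.linearMap R (FractionRing R)) I) :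
              Submodule R (FractionRing R))) ≃ₗ[R]
          (traceIdeal R
            ((Submodule.map (Algebra.linearMap R (FractionRing R)) I) /
              (Submodule.map (Algebra.linearMap R (FractionRing R)) I) :
                Submodule R (FractionRing R)))) →
      ∃ e : (Submodule.map (Algebra.linearMap R (FractionRing R)) I) ≃ₗ[R]
          (((Submodule.map (Algebra.linearMap R (FractionRing R)) I) /
            (Submodule.map (Algebra.linearMap R (FractionRing R)) I) :
              Submodule R (FractionRing R))),
        ∀ (s x : FractionRing R)
          (hs : s ∈ ((Submodule.map (Algebra.linearMap R (FractionRing R)) I) /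
            (Submodule.map (Algebra.linearMap R (FractionRing R)) I) :
              Submodule R (FractionRing R)))
          (hx : x ∈ Submodule.map (Algebra.linearMap R (FractionRing R)) I),
          (e ⟨s * x, Submodule.mem_div_iff_forall_mul_mem.mp hs x hx⟩ : FractionRing R) =
            s * (e ⟨x, hx⟩ : FractionRing R)) := by
  
  classical
  obtain ⟨c, hc, hcI⟩ := hnzd
  set J : Submodule R (FractionRing R) :=
    Submodule.map (Algebra.linearMap R (FractionRing R)) I with hJdef
  set S : Submodule R (FractionRing R) := J / J with hSdef
  have inj : Function.Injective (algebraMap R (FractionRing R)) :=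
    IsFractionRing.injective R (FractionRing R)
  have injL : Function.Injective ⇑(Algebra.linearMap R (FractionRing R)) :=
    fun a b h => inj h
  have hcu : IsUnit (algebraMap R (FractionRing R) c) := IsLocalization.map_units _ ⟨c, hc⟩
  set v : FractionRing R := ↑hcu.unit⁻¹ with hvdef
  have hv : algebraMap R (FractionRing R) c * v = 1 := hcu.mul_val_inv
  have h1S : (1 : FractionRing R) ∈ S :=
    Submodule.mem_div_iff_forall_mul_mem.mpr fun y hy => by rwa [one_mul]
  have hmemJ : ∀ a ∈ I, algebraMap R (FractionRing R) a ∈ J := fun a ha =>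
    Submodule.mem_map.mpr ⟨a, ha, rfl⟩
  -- key step: if `ι b` multiplies `S` into the image of `R` then `b ∈ I`
  have key : ∀ b : R, (∀ s ∈ S, ∃ t : R, algebraMap R (FractionRing R) t
      = algebraMap R (FractionRing R) b * s) → b ∈ I := by
    intro b hb
    have hq : ∀ f : I →ₗ[R] R, ∃ t : R, algebraMap R (FractionRing R) t =
        algebraMap R (FractionRing R) b *
          (algebraMap R (FractionRing R) (f ⟨c, hcI⟩) * v) := by
      intro f
      set p : FractionRing R := algebraMap R (FractionRing R) (f ⟨c, hcI⟩) * v with hpdef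
      have hp : ∀ a ∈ I, ∃ t : R, algebraMap R (FractionRing R) t
          = p * algebraMap R (FractionRing R) a := by
        intro a ha
        refine ⟨f ⟨a, ha⟩, ?_⟩
        have hid := RTLemma.hom_identity I f a c ha hcI
        calc algebraMap R (FractionRing R) (f ⟨a, ha⟩)
            = algebraMap R (FractionRing R) (f ⟨a, ha⟩) *
              (algebraMap R (FractionRing R) c * v) := by rw [hv, mul_one]
          _ = (algebraMap R (FractionRing R) c *
              algebraMap R (FractionRing R) (f ⟨a, ha⟩)) * v := by ring
          _ = (algebraMap R (FractionRing R) a *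
              algebraMap R (FractionRing R) (f ⟨c, hcI⟩)) * v := by rw [hid]
          _ = p * algebraMap R (FractionRing R) a := by rw [hpdef]; ring
      have hpS : p ∈ S := by
        rw [hSdef]
        refine Submodule.mem_div_iff_forall_mul_mem.mpr ?_
        intro y hy
        obtain ⟨a, ha, rfl⟩ := Submodule.mem_map.mp hy
        exact RTLemma.mul_mem_map I htr p hp a ha
      exact hb p hpS
    obtain ⟨a, ha, haq⟩ := RTLemma.mem_of_double I href c hcI v hv
      (algebraMap R (FractionRing R) b) hq
    exact (inj haq) ▸ ha
  -- Part 1 : `tr_R(S) = I`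
  have part1 : traceIdeal R S = I := by
    apply le_antisymm
    · refine Submodule.span_le.mpr ?_
      rintro r ⟨f, m, rfl⟩
      have h1S' : algebraMap R (FractionRing R) 1 ∈ S := by rw [map_one]; exact h1S
      have hfx : ∀ (x : FractionRing R) (hx : x ∈ S),
          algebraMap R (FractionRing R) (f ⟨x, hx⟩)
            = x * algebraMap R (FractionRing R) (f ⟨1, h1S⟩) := by
        intro x hx
        have h0 := RTLemma.mulform S ((Algebra.linearMap R (FractionRing R)).comp f) 1
          (one_mem _) h1S' x hx
        have hsub : (⟨algebraMap R (FractionRing R) 1, h1S'⟩ : S) = ⟨1, h1S⟩ :=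
          Subtype.ext (map_one _)
        rw [hsub] at h0
        simpa [LinearMap.comp_apply, map_one] using h0
      set b := f ⟨1, h1S⟩ with hbdef
      have hbI : b ∈ I := by
        apply key
        intro s hs
        exact ⟨f ⟨s, hs⟩, by rw [hfx s hs, mul_comm]⟩
      have hfm : algebraMap R (FractionRing R) (f m)
          = (m : FractionRing R) * algebraMap R (FractionRing R) b := by
        have h5 := hfx m.1 m.2
        simpa using h5
      have hmJ : (m : FractionRing R) * algebraMap R (FractionRing R) b ∈ J :=
        Submodule.mem_div_iff_forall_mul_mem.mp m.2 _ (hmemJ b hbI)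
      rw [← hfm] at hmJ
      obtain ⟨t, htI, hteq⟩ := Submodule.mem_map.mp hmJ
      have hte : t = f m := inj hteq
      exact hte ▸ htI
    · intro a ha
      have hp : ∀ s ∈ S, ∃ t : R, algebraMap R (FractionRing R) t
          = algebraMap R (FractionRing R) a * s := by
        intro s hs
        have h6 : s * algebraMap R (FractionRing R) a ∈ J :=
          Submodule.mem_div_iff_forall_mul_mem.mp hs _ (hmemJ a ha)
        obtain ⟨t, htI, ht⟩ := Submodule.mem_map.mp h6
        exact ⟨t, by rw [mul_comm]; exact ht⟩
      have hfa : RTLemma.mulHom S (algebraMap R (FractionRing R) a) hp ⟨1, h1S⟩ = a := by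
        apply inj
        rw [RTLemma.alg_mulHom S _ hp 1 h1S, mul_one]
      exact Submodule.subset_span ⟨RTLemma.mulHom S _ hp, ⟨1, h1S⟩, hfa⟩
  refine ⟨part1, fun hne => ?_⟩
  obtain ⟨φ⟩ := hne
  let ψ : J ≃ₗ[R] S :=
    (((Submodule.equivMapOfInjective (Algebra.linearMap R (FractionRing R)) injL I).symm).trans
      ((LinearEquiv.ofEq _ _ part1).symm)).trans φ.symm
  set g : J →ₗ[R] FractionRing R := S.subtype ∘ₗ ψ.toLinearMap with hgdef
  have hcJ : algebraMap R (FractionRing R) c ∈ J := hmemJ c hcI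
  set u : FractionRing R := g ⟨algebraMap R (FractionRing R) c, hcJ⟩ * v with hudef
  have hmul : ∀ (x : FractionRing R) (hx : x ∈ J),
      (ψ ⟨x, hx⟩ : FractionRing R) = u * x := by
    intro x hx
    have h0 := RTLemma.mulform J g c hc hcJ x hx
    calc (ψ ⟨x, hx⟩ : FractionRing R) = g ⟨x, hx⟩ := rfl
      _ = g ⟨x, hx⟩ * (algebraMap R (FractionRing R) c * v) := by rw [hv, mul_one]
      _ = (g ⟨x, hx⟩ * algebraMap R (FractionRing R) c) * v := by ring
      _ = (x * g ⟨algebraMap R (FractionRing R) c, hcJ⟩) * v := by rw [h0]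
      _ = u * x := by rw [hudef]; ring
  refine ⟨ψ, ?_⟩
  intro s x hs hx
  rw [hmul (s * x) (Submodule.mem_div_iff_forall_mul_mem.mp hs x hx), hmul x hx]
  ring
end

section
/- Let (R,m,k) be a commutative noetherian local ring of depth 1 satisfying: every ideal of R is isomorphic to a trace ideal. If m is not isomorphic to R (i.e., R is not a discrete valuation ring), then m = tr_R(m), the ring S = m : m (colon in the total quotient ring) strictly contains R, and m is generated by at most two elements. -/
universe u

open nonZeroDivisors IsLocalRing
open IsLocalRing
open scoped Pointwise

/-- The depth of a noetherian local ring: the supremum of lengths of regular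
sequences contained in the maximal ideal. -/
noncomputable def ringDepth (R : Type*) [CommRing R] [IsLocalRing R] : ℕ :=
  sSup {n | ∃ rs : List R, rs.length = n ∧ (∀ r ∈ rs, r ∈ maximalIdeal R) ∧
    RingTheory.Sequence.IsRegular R rs}

/-- The embedding dimension of a local ring: the dimension of `m/m²` over the
residue field. -/
noncomputable def embDim (R : Type*) [CommRing R] [IsLocalRing R] : ℕ :=
  Module.finrank (ResidueField R) (CotangentSpace R)

/-- The length of a module, as the longest chain of submodules (a natural number;
`0` if infinite). -/
noncomputable def lengthNat (R M : Type*) [CommRing R] [AddCommGroup M] [Module R M] : ℕ :=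
  (WithBot.unbotD 0 (Order.krullDim (Submodule R M))).toNat

/-- `e` is the Hilbert–Samuel multiplicity of a (one-dimensional) local ring `R`:
`e = lim_{n→∞} ℓ(R/m^{n+1})/n`. -/
def HasMultiplicity (R : Type*) [CommRing R] [IsLocalRing R] (e : ℝ) : Prop :=
  Filter.Tendsto
    (fun n : ℕ => (lengthNat R (R ⧸ (maximalIdeal R) ^ (n + 1)) : ℝ) / (n + 1))
    Filter.atTop (nhds e)

section Aux

variable {R : Type u} [CommRing R]

lemma traceIdeal_closed {M : Type u} [AddCommGroup M] [Module R M]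
    (g : (traceIdeal R M) →ₗ[R] R) : ∀ (r : R) (hr : r ∈ traceIdeal R M),
    g ⟨r, hr⟩ ∈ traceIdeal R M := by
  intro r hr
  induction hr using Submodule.span_induction with
  | mem r hrs =>
      obtain ⟨f, m₀, rfl⟩ := hrs
      have hmem : ∀ c : M, f c ∈ traceIdeal R M := fun c =>
        Submodule.subset_span ⟨f, c, rfl⟩
      have : g ⟨f m₀, Submodule.subset_span ⟨f, m₀, rfl⟩⟩
          = (g ∘ₗ LinearMap.codRestrict (traceIdeal R M) f hmem) m₀ := rfl
      rw [this]
      exact Submodule.subset_span ⟨_, m₀, rfl⟩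
  | zero =>
      have : (⟨(0:R), (traceIdeal R M).zero_mem⟩ : traceIdeal R M) = 0 := rfl
      rw [this, map_zero]; exact (traceIdeal R M).zero_mem
  | add a b ha hb iha ihb =>
      have : (⟨a + b, (traceIdeal R M).add_mem ha hb⟩ : traceIdeal R M)
          = ⟨a, ha⟩ + ⟨b, hb⟩ := rfl
      rw [this, map_add]
      exact (traceIdeal R M).add_mem iha ihb
  | smul t a ha iha =>
      have : (⟨t • a, (traceIdeal R M).smul_mem t ha⟩ : traceIdeal R M)
          = t • ⟨a, ha⟩ := rfl
      rw [this, map_smul]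
      exact (traceIdeal R M).smul_mem t iha

lemma trace_absorb {J : Ideal R} (hJ : IsTraceIdeal J) {d r : R}
    (hd : ∀ t, d * t = 0 → t = 0)
    (hdiv : ∀ j ∈ J, ∃ a, r * j = d * a) :
    ∀ j ∈ J, ∃ a ∈ J, r * j = d * a := by
  have huniq : ∀ j (hj : j ∈ J), r * j = d * Classical.choose (hdiv j hj) :=
    fun j hj => Classical.choose_spec (hdiv j hj)
  set g0 : J → R := fun j => Classical.choose (hdiv j.1 j.2) with hg0
  have hkey : ∀ j : J, r * j.1 = d * g0 j := fun j => huniq j.1 j.2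
  have hcancel : ∀ a b : R, d * a = d * b → a = b := by
    intro a b hab
    have h0 : d * (a - b) = 0 := by rw [mul_sub, hab, sub_self]
    exact sub_eq_zero.mp (hd _ h0)
  have hadd : ∀ x y : J, g0 (x + y) = g0 x + g0 y := by
    intro x y
    apply hcancel
    rw [← hkey, Submodule.coe_add, mul_add, hkey x, hkey y, mul_add]
  have hsmul : ∀ (t : R) (x : J), g0 (t • x) = t * g0 x := by
    intro t x
    apply hcancel
    rw [← hkey, Submodule.coe_smul, smul_eq_mul,
      show r * (t * x.1) = t * (r * x.1) by ring, hkey x]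
    ring
  let g : J →ₗ[R] R :=
    { toFun := g0
      map_add' := hadd
      map_smul' := hsmul }
  obtain ⟨M, iM, mM, hJM⟩ := hJ
  subst hJM
  intro j hj
  refine ⟨g0 ⟨j, hj⟩, ?_, hkey ⟨j, hj⟩⟩
  exact traceIdeal_closed g j hj

end Aux

section Aux2

variable {R : Type u} [CommRing R] [IsLocalRing R]

lemma mIso {z : R} (hz : ∀ t, z * t = 0 → t = 0) (hzm : z ∈ maximalIdeal R)
    (hle : maximalIdeal R ≤ Ideal.span {z}) : Nonempty ((maximalIdeal R) ≃ₗ[R] R) := by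
  let φ : R →ₗ[R] maximalIdeal R :=
    { toFun := fun r => ⟨z * r, Ideal.mul_mem_right r _ hzm⟩
      map_add' := fun a b => Subtype.ext (mul_add z a b)
      map_smul' := fun t a => Subtype.ext
        (by simp only [smul_eq_mul, RingHom.id_apply, SetLike.mk_smul_mk]; ring) }
  have hbij : Function.Bijective φ := by
    constructor
    · intro a b hab
      have h1 : z * a = z * b := congrArg Subtype.val hab
      have h0 : z * (a - b) = 0 := by rw [mul_sub, h1, sub_self]
      exact sub_eq_zero.mp (hz _ h0)
    · rintro ⟨a, ha⟩
      obtain ⟨c, hc⟩ := Ideal.mem_span_singleton'.mp (hle ha)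
      exact ⟨c, Subtype.ext (by show z * c = a; simpa [mul_comm] using hc)⟩
  exact ⟨(LinearEquiv.ofBijective φ hbij).symm⟩

lemma iso_bilinear {I J : Ideal R} (φ : I →ₗ[R] J) {a b : R} (ha : a ∈ I) (hb : b ∈ I) :
    a * (φ ⟨b, hb⟩ : R) = b * (φ ⟨a, ha⟩ : R) := by
  have h1 : a • (⟨b, hb⟩ : I) = b • (⟨a, ha⟩ : I) :=
    Subtype.ext (by simp only [SetLike.mk_smul_mk, smul_eq_mul]; ring)
  calc a * (φ ⟨b, hb⟩ : R) = ((a • φ ⟨b, hb⟩ : J) : R) := by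
        simp [Submodule.coe_smul, smul_eq_mul]
    _ = ((φ (a • ⟨b, hb⟩) : J) : R) := by rw [map_smul]
    _ = ((φ (b • ⟨a, ha⟩) : J) : R) := by rw [h1]
    _ = ((b • φ ⟨a, ha⟩ : J) : R) := by rw [map_smul]
    _ = b * (φ ⟨a, ha⟩ : R) := by simp [Submodule.coe_smul, smul_eq_mul]

lemma iso_cancel {I J : Ideal R} (φ : I ≃ₗ[R] J) {x : R} (hx : x ∈ I)
    (hcx : ∀ t, x * t = 0 → t = 0) : ∀ t, (φ ⟨x, hx⟩ : R) * t = 0 → t = 0 := by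
  intro t ht
  have h1 : ((t • φ ⟨x, hx⟩ : J) : R) = 0 := by
    simp only [Submodule.coe_smul, smul_eq_mul]
    rw [mul_comm]; exact ht
  have h2 : (t • φ ⟨x, hx⟩ : J) = 0 := by
    exact Subtype.ext h1
  rw [← map_smul] at h2
  have h3 : (t • (⟨x, hx⟩ : I)) = 0 := by
    apply φ.injective; rw [h2, map_zero]
  have h4 : t * x = 0 := by
    have := congrArg Subtype.val h3
    simpa [smul_eq_mul] using this
  exact hcx t (by rwa [mul_comm])

lemma iso_surj {I J : Ideal R} (φ : I ≃ₗ[R] J) :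
    ∀ j ∈ J, ∃ b, ∃ hb : b ∈ I, (φ ⟨b, hb⟩ : R) = j := by
  intro j hj
  obtain ⟨⟨b, hb⟩, hfb⟩ := φ.surjective ⟨j, hj⟩
  exact ⟨b, hb, by rw [hfb]⟩

lemma iso_principal {I J : Ideal R} (φ : I ≃ₗ[R] J) (hJtop : J = ⊤) :
    ∃ d, ∃ _ : d ∈ I, ∀ b (hb : b ∈ I), b = (φ ⟨b, hb⟩ : R) * d := by
  have h1J : (1 : R) ∈ J := hJtop ▸ Submodule.mem_top
  refine ⟨(φ.symm ⟨1, h1J⟩ : R), (φ.symm ⟨1, h1J⟩).2, ?_⟩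
  intro b hb
  have h2 : (⟨b, hb⟩ : I) = (φ ⟨b, hb⟩ : R) • φ.symm ⟨1, h1J⟩ := by
    rw [← map_smul, ← φ.symm_apply_apply ⟨b, hb⟩]
    congr 1
    exact Subtype.ext (by simp [smul_eq_mul])
  have := congrArg Subtype.val h2
  simpa [smul_eq_mul] using this

end Aux2

section Aux3

set_option linter.unusedSectionVars false

variable {R : Type u} [CommRing R] [IsLocalRing R]

lemma trace_m_eq {x : R} (hx : ∀ t, x * t = 0 → t = 0) (hxm : x ∈ maximalIdeal R)
    (h : ¬ Nonempty ((maximalIdeal R) ≃ₗ[R] R)) :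
    traceIdeal R (maximalIdeal R) = maximalIdeal R := by
  apply le_antisymm
  · apply Submodule.span_le.mpr
    rintro r ⟨f, z₀, rfl⟩
    by_contra hfm
    have hu : IsUnit (f z₀) := by
      by_contra hu
      exact hfm (IsLocalRing.mem_maximalIdeal _ |>.mpr hu)
    obtain ⟨v, hv⟩ : ∃ v, f z₀ * v = 1 := by
      obtain ⟨u, hu'⟩ := hu
      exact ⟨(u⁻¹ : Rˣ), by rw [← hu', Units.mul_inv]⟩
    -- the bilinear identity
    have hbil : ∀ a (ha : a ∈ maximalIdeal R),
        a * f z₀ = z₀.1 * f ⟨a, ha⟩ := by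
      intro a ha
      have h1 : a • z₀ = z₀.1 • (⟨a, ha⟩ : maximalIdeal R) :=
        Subtype.ext (by simp only [SetLike.val_smul, smul_eq_mul]; ring)
      calc a * f z₀ = a • f z₀ := (smul_eq_mul _ _).symm
        _ = f (a • z₀) := (map_smul f a z₀).symm
        _ = f (z₀.1 • ⟨a, ha⟩) := by rw [h1]
        _ = z₀.1 • f ⟨a, ha⟩ := map_smul f _ _
        _ = z₀.1 * f ⟨a, ha⟩ := smul_eq_mul _ _
    -- z₀.1 is cancellable
    have hz₀ : ∀ t, z₀.1 * t = 0 → t = 0 := by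
      intro t ht
      have h2 : x * (f z₀ * t) = 0 := by
        rw [show x * (f z₀ * t) = (x * f z₀) * t by ring, hbil x hxm,
          show z₀.1 * f ⟨x, hxm⟩ * t = (z₀.1 * t) * f ⟨x, hxm⟩ by ring, ht, zero_mul]
      have h3 : f z₀ * t = 0 := hx _ h2
      calc t = (f z₀ * v) * t := by rw [hv, one_mul]
        _ = (f z₀ * t) * v := by ring
        _ = 0 := by rw [h3, zero_mul]
    have hle : maximalIdeal R ≤ Ideal.span {z₀.1} := by
      intro a ha
      apply Ideal.mem_span_singleton'.mpr
      refine ⟨f ⟨a, ha⟩ * v, ?_⟩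
      calc f ⟨a, ha⟩ * v * z₀.1 = (z₀.1 * f ⟨a, ha⟩) * v := by ring
        _ = (a * f z₀) * v := by rw [hbil a ha]
        _ = a * (f z₀ * v) := by ring
        _ = a := by rw [hv, mul_one]
    exact h (mIso hz₀ z₀.2 hle)
  · intro a ha
    exact Submodule.subset_span ⟨(maximalIdeal R).subtype, ⟨a, ha⟩, rfl⟩

end Aux3

section Aux4

set_option linter.unusedSectionVars false

variable {R : Type u} [CommRing R] [IsLocalRing R]

lemma smul_top_eq_span (x : R) :
    x • (⊤ : Submodule R R) = (Ideal.span {x} : Ideal R) := by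
  rw [← Submodule.ideal_span_singleton_smul, Ideal.smul_eq_mul, Ideal.mul_top]

lemma depth_one_extract (hdepth : ringDepth R = 1) :
    ∃ x, x ∈ maximalIdeal R ∧ (∀ t, x * t = 0 → t = 0) ∧
      ∀ z ∈ maximalIdeal R, ∃ w, w ∉ Ideal.span {x} ∧ z * w ∈ Ideal.span {x} := by
  classical
  set S : Set ℕ := {n | ∃ rs : List R, rs.length = n ∧ (∀ r ∈ rs, r ∈ maximalIdeal R) ∧
    RingTheory.Sequence.IsRegular R rs} with hS
  have hdS : sSup S = 1 := hdepth
  have h0 : 0 ∈ S := ⟨[], rfl, by simp, RingTheory.Sequence.IsRegular.nil _ _⟩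
  have hbdd : BddAbove S := by
    by_contra hb
    rw [csSup_of_not_bddAbove hb, csSup_empty] at hdS
    exact absurd hdS (by norm_num)
  have h1 : 1 ∈ S := hdS ▸ Nat.sSup_mem ⟨0, h0⟩ hbdd
  obtain ⟨rs, hlen, hmem, hreg⟩ := h1
  obtain ⟨x, rfl⟩ := List.length_eq_one_iff.mp hlen
  have hxm : x ∈ maximalIdeal R := hmem x (by simp)
  have hsmul : IsSMulRegular R x :=
    ((RingTheory.Sequence.isRegular_cons_iff R x []).mp hreg).1
  have hcancel : ∀ t, x * t = 0 → t = 0 := by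
    intro t ht
    have : x • t = x • 0 := by simpa [smul_eq_mul] using ht
    exact hsmul this
  refine ⟨x, hxm, hcancel, ?_⟩
  intro z hz
  by_contra hcon
  push_neg at hcon
  have hzw : ∀ w, z * w ∈ Ideal.span {x} → w ∈ Ideal.span {x} := by
    intro w hw
    by_contra hwn
    exact (hcon w hwn) hw
  -- build a regular sequence [x, z]
  have h2 : RingTheory.Sequence.IsRegular R [x, z] := by
    rw [RingTheory.Sequence.isRegular_cons_iff]
    refine ⟨hsmul, ?_⟩
    show RingTheory.Sequence.IsRegular (R ⧸ (x • (⊤ : Submodule R R))) [z]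
    rw [smul_top_eq_span x]
    rw [RingTheory.Sequence.isRegular_cons_iff]
    constructor
    · -- z is regular on R / span {x}
      intro a b hab
      obtain ⟨a', rfl⟩ := Submodule.Quotient.mk_surjective _ a
      obtain ⟨b', rfl⟩ := Submodule.Quotient.mk_surjective _ b
      have h3 : Submodule.Quotient.mk (p := (Ideal.span {x} : Submodule R R)) (z • a')
          = Submodule.Quotient.mk (z • b') := by
        simpa only [Submodule.Quotient.mk_smul] using hab
      have h4 : z • a' - z • b' ∈ (Ideal.span {x} : Submodule R R) :=
        (Submodule.Quotient.eq _).mp h3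
      have h5 : z * (a' - b') ∈ Ideal.span {x} := by
        simpa [smul_eq_mul, mul_sub] using h4
      exact (Submodule.Quotient.eq _).mpr (hzw _ h5)
    · -- the length-zero tail
      have hne : (z • (⊤ : Submodule R (R ⧸ (Ideal.span {x} : Submodule R R)))) < ⊤ := by
        rw [lt_top_iff_ne_top]
        intro htop
        have h1m : Submodule.Quotient.mk (p := (Ideal.span {x} : Submodule R R)) 1
            ∈ z • (⊤ : Submodule R (R ⧸ (Ideal.span {x} : Submodule R R))) := by
          rw [htop]; trivial
        obtain ⟨a0, -, ha0⟩ := Set.mem_smul_set.mp h1m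
        obtain ⟨a, rfl⟩ := Submodule.Quotient.mk_surjective _ a0
        have hz1 : Submodule.Quotient.mk (p := (Ideal.span {x} : Submodule R R)) (z • a)
            = Submodule.Quotient.mk 1 := by
          rw [Submodule.Quotient.mk_smul]; exact ha0
        have h6 : z • a - 1 ∈ (Ideal.span {x} : Submodule R R) :=
          (Submodule.Quotient.eq _).mp hz1
        obtain ⟨c, hc⟩ := Ideal.mem_span_singleton'.mp h6
        have hc' : c * x = z * a - 1 := by simpa [smul_eq_mul] using hc
        have h1mem : (1 : R) ∈ maximalIdeal R := by
          have heq : (1 : R) = z * a - c * x := by rw [hc']; ring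
          rw [heq]
          exact Submodule.sub_mem _ (Ideal.mul_mem_right _ _ hz)
            (Ideal.mul_mem_left _ _ hxm)
        exact (maximalIdeal.isMaximal R).ne_top (Ideal.eq_top_iff_one _ |>.mpr h1mem)
      haveI : Nontrivial ((R ⧸ (Ideal.span {x} : Submodule R R)) ⧸
          (z • (⊤ : Submodule R (R ⧸ (Ideal.span {x} : Submodule R R))))) :=
        Submodule.Quotient.nontrivial_iff.mpr hne.ne
      exact RingTheory.Sequence.IsRegular.nil _ _
  have h2S : 2 ∈ S := by
    refine ⟨[x, z], rfl, ?_, h2⟩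
    intro r hr
    rcases List.mem_pair.mp hr with rfl | rfl
    · exact hxm
    · exact hz
  have : (2 : ℕ) ≤ 1 := hdS ▸ le_csSup hbdd h2S
  omega

end Aux4

section Aux5

set_option linter.unusedSectionVars false

variable {R : Type u} [CommRing R] [IsLocalRing R] [IsNoetherianRing R]

lemma exists_socle {x : R} (hxm : x ∈ maximalIdeal R)
    (hzd : ∀ z ∈ maximalIdeal R, ∃ w, w ∉ Ideal.span {x} ∧ z * w ∈ Ideal.span {x}) :
    ∃ y, y ∉ Ideal.span {x} ∧ ∀ z ∈ maximalIdeal R, y * z ∈ Ideal.span {x} := by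
  classical
  obtain ⟨t, htinf, htprim, -, hmin⟩ := Ideal.IsLasker.minimal (Ideal.isLasker R R) (Ideal.span {x})
  -- the maximal ideal is contained in the union of the radicals
  have hsub : (maximalIdeal R : Set R) ⊆ ⋃ Q ∈ t, ((Ideal.radical Q : Ideal R) : Set R) := by
    intro z hz
    obtain ⟨w, hw1, hw2⟩ := hzd z hz
    have hQex : ∃ Q ∈ t, w ∉ Q := by
      by_contra hall
      push_neg at hall
      have : w ∈ t.inf id := by
        rw [Submodule.mem_finsetInf]
        intro i hi; exact hall i hi
      rw [htinf] at this
      exact hw1 this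
    obtain ⟨Q, hQt, hwQ⟩ := hQex
    have hzwQ : w * z ∈ Q := by
      have hle : Ideal.span {x} ≤ Q := htinf ▸ Finset.inf_le hQt
      exact hle (by rwa [mul_comm])
    have := ((Ideal.isPrimary_iff).mp (htprim hQt)).2 hzwQ
    rcases this with hwq | hzr
    · exact absurd hwq hwQ
    · exact Set.mem_biUnion hQt hzr
  have hp : ∀ Q ∈ t, Q ≠ ⊥ → Q ≠ ⊥ → (Ideal.radical Q).IsPrime :=
    fun Q hQ _ _ => Ideal.isPrime_radical (htprim hQ)
  obtain ⟨Q₀, hQ₀t, hle⟩ := (Ideal.subset_union_prime ⊥ ⊥ hp).mp hsub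
  have hQ₀prim := htprim hQ₀t
  have hradm : Ideal.radical Q₀ = maximalIdeal R :=
    le_antisymm (le_maximalIdeal (Ideal.isPrime_radical hQ₀prim).ne_top) hle
  -- an element in the other components but not in Q₀
  obtain ⟨y₁, hy₁N, hy₁Q₀⟩ := SetLike.not_le_iff_exists.mp (hmin hQ₀t)
  -- a power of m is inside Q₀
  obtain ⟨k, hk⟩ := Ideal.exists_pow_le_of_le_radical_of_fg
    (le_of_eq hradm.symm) (IsNoetherian.noetherian _)
  -- y₁ * m^k ⊆ span {x}
  have hkey : Ideal.span {y₁} * (maximalIdeal R) ^ k ≤ Ideal.span {x} := by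
    rw [← htinf]
    apply Finset.le_inf
    intro Q hQ
    rcases eq_or_ne Q Q₀ with rfl | hne
    · apply Ideal.mul_le.mpr
      intro r hr s hs
      exact Ideal.mul_mem_left _ _ (hk hs)
    · have hy₁Q : y₁ ∈ Q := by
        have hQe : (t.erase Q₀).inf id ≤ Q := Finset.inf_le (Finset.mem_erase.mpr ⟨hne, hQ⟩)
        exact hQe hy₁N
      apply Ideal.mul_le.mpr
      intro r hr s hs
      have hrQ : r ∈ Q := (Ideal.span_singleton_le_iff_mem _ |>.mpr hy₁Q) hr
      exact Ideal.mul_mem_right _ _ hrQ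
  -- find the minimal power
  have hex : ∃ j, Ideal.span {y₁} * (maximalIdeal R) ^ j ≤ Ideal.span {x} := ⟨k, hkey⟩
  let j := Nat.find hex
  have hj : Ideal.span {y₁} * (maximalIdeal R) ^ j ≤ Ideal.span {x} := Nat.find_spec hex
  have hj0 : j ≠ 0 := by
    intro h0
    have := hj
    rw [h0, pow_zero, mul_one, Ideal.span_singleton_le_iff_mem] at this
    have hxQ₀ : Ideal.span {x} ≤ Q₀ := htinf ▸ Finset.inf_le hQ₀t
    exact hy₁Q₀ (hxQ₀ this)
  have hjm : ¬ Ideal.span {y₁} * (maximalIdeal R) ^ (j - 1) ≤ Ideal.span {x} :=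
    Nat.find_min hex (by omega)
  obtain ⟨y₀, hy₀mem, hy₀not⟩ := SetLike.not_le_iff_exists.mp hjm
  refine ⟨y₀, hy₀not, ?_⟩
  intro z hz
  have hmul : y₀ * z ∈ (Ideal.span {y₁} * (maximalIdeal R) ^ (j - 1)) * maximalIdeal R :=
    Ideal.mul_mem_mul hy₀mem hz
  have heq : (Ideal.span {y₁} * (maximalIdeal R) ^ (j - 1)) * maximalIdeal R
      = Ideal.span {y₁} * (maximalIdeal R) ^ j := by
    rw [mul_assoc, ← pow_succ]
    congr 2
    omega
  rw [heq] at hmul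
  exact hj hmul

end Aux5


set_option maxHeartbeats 1000000 in
/-- For a depth-one noetherian local ring satisfying the Lindo–Pande condition whose
maximal ideal is not free, one has `m = tr(m)`, the ring `S = m : m` (colon in the total
quotient ring) strictly contains `R`, and `m` is two-generated. -/
theorem depth_one_LP_structure (R : Type u) [CommRing R] [IsNoetherianRing R]
    [IsLocalRing R] (hdepth : ringDepth R = 1) (hlp : LP R)
    (h : ¬ Nonempty ((maximalIdeal R) ≃ₗ[R] R)) :
    traceIdeal R (maximalIdeal R) = maximalIdeal R ∧
      (1 : Submodule R (FractionRing R)) <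
        (Submodule.map (Algebra.linearMap R (FractionRing R)) (maximalIdeal R)) /
          (Submodule.map (Algebra.linearMap R (FractionRing R)) (maximalIdeal R)) ∧
      ∃ a b : R, maximalIdeal R = Ideal.span {a, b} := by
  classical
  obtain ⟨x, hxm, hx, hzd⟩ := depth_one_extract hdepth
  have htr : traceIdeal R (maximalIdeal R) = maximalIdeal R := trace_m_eq hx hxm h
  have htrI : IsTraceIdeal (maximalIdeal R) :=
    ⟨(maximalIdeal R), inferInstance, inferInstance, htr.symm⟩
  obtain ⟨y₀, hy₀, hy₀m⟩ := exists_socle hxm hzd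
  have hy₀div : ∀ z ∈ maximalIdeal R, ∃ a, y₀ * z = x * a := by
    intro z hz
    obtain ⟨c, hc⟩ := Ideal.mem_span_singleton'.mp (hy₀m z hz)
    exact ⟨c, by rw [← hc]; ring⟩
  have hy₀m' : ∀ z ∈ maximalIdeal R, ∃ w ∈ maximalIdeal R, y₀ * z = x * w :=
    trace_absorb htrI hx hy₀div
  -- the ideal B = (x·m :ᵣ m)
  set B : Ideal R := Submodule.colon (Ideal.span {x} * maximalIdeal R) (maximalIdeal R)
    with hBdef
  have hmemB : ∀ b : R, b ∈ B ↔
      ∀ z ∈ maximalIdeal R, ∃ w ∈ maximalIdeal R, b * z = x * w := by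
    intro b
    rw [hBdef, Submodule.mem_colon]
    constructor
    · intro hb z hz
      obtain ⟨w, hw, hxw⟩ := Ideal.mem_span_singleton_mul.mp (hb z hz)
      exact ⟨w, hw, by rw [hxw]; rfl⟩
    · intro hb z hz
      obtain ⟨w, hw, he⟩ := hb z hz
      exact Ideal.mem_span_singleton_mul.mpr ⟨w, hw, by rw [← he]; rfl⟩
  have hxB : x ∈ B := (hmemB x).mpr (fun z hz => ⟨z, hz, rfl⟩)
  have hy₀B : y₀ ∈ B := (hmemB y₀).mpr hy₀m'
  -- First application of LP : to B
  obtain ⟨J, hJtrace, ⟨φ⟩⟩ := hlp B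
  set c : R := (φ ⟨x, hxB⟩ : R) with hcdef
  have hcJ : c ∈ J := (φ ⟨x, hxB⟩).2
  have hbil : ∀ b (hb : b ∈ B), x * (φ ⟨b, hb⟩ : R) = b * c :=
    fun b hb => iso_bilinear φ.toLinearMap hxB hb
  have hc : ∀ t, c * t = 0 → t = 0 := iso_cancel φ hxB hx
  have hsurjJ : ∀ j ∈ J, ∃ b, ∃ hb : b ∈ B, (φ ⟨b, hb⟩ : R) = j := iso_surj φ
  have h1m : (1 : R) ∉ maximalIdeal R := by
    intro h1
    exact (maximalIdeal.isMaximal R).ne_top (Ideal.eq_top_iff_one _ |>.mpr h1)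
  -- J is proper
  have hJm : J ≤ maximalIdeal R := by
    rcases eq_or_ne J ⊤ with hJt | hJne
    · exfalso
      obtain ⟨d, hdB, hdgen⟩ := iso_principal φ hJt
      have hxd : x = c * d := by
        have := hdgen x hxB
        rwa [← hcdef] at this
      by_cases hcm : c ∈ maximalIdeal R
      · obtain ⟨w, hwm, hdc⟩ := (hmemB d).mp hdB c hcm
        have h0 : x * (1 - w) = 0 := by
          rw [mul_sub, mul_one, ← hdc, mul_comm d c, ← hxd, sub_self]
        have h1w : (1 : R) = w := sub_eq_zero.mp (hx _ h0)
        exact h1m (h1w ▸ hwm)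
      · have hcu : IsUnit c := by
          by_contra hq
          exact hcm ((IsLocalRing.mem_maximalIdeal c).mpr hq)
        obtain ⟨v, hv⟩ : ∃ v, c * v = 1 := by
          obtain ⟨u, hu'⟩ := hcu
          exact ⟨(u⁻¹ : Rˣ), by rw [← hu', Units.mul_inv]⟩
        apply hy₀
        apply Ideal.mem_span_singleton'.mpr
        have hb := hdgen y₀ hy₀B
        refine ⟨(φ ⟨y₀, hy₀B⟩ : R) * v, ?_⟩
        have hdvx : d = v * x := by
          calc d = 1 * d := (one_mul d).symm
            _ = (c * v) * d := by rw [hv]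
            _ = v * (c * d) := by ring
            _ = v * x := by rw [← hxd]
        have harr : (φ ⟨y₀, hy₀B⟩ : R) * v * x = (φ ⟨y₀, hy₀B⟩ : R) * (v * x) := by ring
        rw [harr, ← hdvx, ← hb]
    · exact le_maximalIdeal hJne
  -- the maximal ideal is contained in J
  have hmJ : maximalIdeal R ≤ J := by
    intro z hz
    have hdiv : ∀ j ∈ J, ∃ a, z * j = c * a := by
      intro j hj
      obtain ⟨b, hb, hfb⟩ := hsurjJ j hj
      obtain ⟨w, hwm, hbz⟩ := (hmemB b).mp hb z hz
      refine ⟨w, ?_⟩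
      have hxj : x * j = b * c := by rw [← hfb]; exact hbil b hb
      have hxx : x * (z * j) = x * (c * w) := by
        calc x * (z * j) = z * (x * j) := by ring
          _ = z * (b * c) := by rw [hxj]
          _ = (b * z) * c := by ring
          _ = (x * w) * c := by rw [hbz]
          _ = x * (c * w) := by ring
      have h0 : x * (z * j - c * w) = 0 := by rw [mul_sub, hxx, sub_self]
      exact sub_eq_zero.mp (hx _ h0)
    obtain ⟨a, haJ, hza⟩ := trace_absorb hJtrace hc hdiv c hcJ
    have h0 : c * (z - a) = 0 := by
      rw [mul_sub, ← hza]; ring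
    have : z = a := sub_eq_zero.mp (hc _ h0)
    rwa [this]
  have hJeq : J = maximalIdeal R := le_antisymm hJm hmJ
  have hcm : c ∈ maximalIdeal R := hJeq ▸ hcJ
  -- descriptions of x·m = c·B
  have hA : ∀ z ∈ maximalIdeal R, ∃ b ∈ B, x * z = b * c := by
    intro z hz
    obtain ⟨b, hb, hfb⟩ := hsurjJ z (hJeq ▸ hz)
    exact ⟨b, hb, by rw [← hfb]; exact hbil b hb⟩
  have hB' : ∀ b (hb : b ∈ B), ∃ z ∈ maximalIdeal R, x * z = b * c := by
    intro b hb
    refine ⟨(φ ⟨b, hb⟩ : R), hJeq ▸ (φ ⟨b, hb⟩).2, hbil b hb⟩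
  obtain ⟨w₀, hw₀m, hxw₀⟩ := hB' y₀ hy₀B
  -- Second application of LP : to I₀ = (x, y₀)
  set I₀ : Ideal R := Ideal.span {x, y₀} with hI₀def
  have hxI : x ∈ I₀ := Submodule.subset_span (by left; rfl)
  have hyI : y₀ ∈ I₀ := Submodule.subset_span (by right; rfl)
  obtain ⟨J', hJ'trace, ⟨ψ⟩⟩ := hlp I₀
  set c' : R := (ψ ⟨x, hxI⟩ : R) with hc'def
  have hc'J : c' ∈ J' := (ψ ⟨x, hxI⟩).2
  have hbil' : ∀ i (hi : i ∈ I₀), x * (ψ ⟨i, hi⟩ : R) = i * c' :=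
    fun i hi => iso_bilinear ψ.toLinearMap hxI hi
  have hc' : ∀ t, c' * t = 0 → t = 0 := iso_cancel ψ hxI hx
  have hsurjJ' : ∀ j ∈ J', ∃ i, ∃ hi : i ∈ I₀, (ψ ⟨i, hi⟩ : R) = j := iso_surj ψ
  have hJ'm : J' ≤ maximalIdeal R := by
    rcases eq_or_ne J' ⊤ with hJt | hJne
    · exfalso
      obtain ⟨d, hdI, hdgen⟩ := iso_principal ψ hJt
      have hxd : x = c' * d := by
        have := hdgen x hxI
        rwa [← hc'def] at this
      by_cases hcm' : c' ∈ maximalIdeal R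
      · -- c' ∈ m : then m is principal, contradiction
        obtain ⟨α, β, hαβ⟩ := Ideal.mem_span_pair.mp (hI₀def ▸ hdI)
        have hxx : x * (1 - c' * α) = (c' * β) * y₀ := by
          calc x * (1 - c' * α) = x - (c' * α) * x := by ring
            _ = c' * d - (c' * α) * x := by rw [← hxd]
            _ = c' * (α * x + β * y₀) - (c' * α) * x := by rw [hαβ]
            _ = (c' * β) * y₀ := by ring
        have hunit : (1 - c' * α) ∉ maximalIdeal R := by
          intro hmem
          apply h1m
          have : (1 : R) = (1 - c' * α) + c' * α := by ring
          rw [this]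
          exact Submodule.add_mem _ hmem
            (Ideal.mul_mem_right _ _ hcm')
        have hu : IsUnit (1 - c' * α) := by
          by_contra hq
          exact hunit ((IsLocalRing.mem_maximalIdeal _).mpr hq)
        obtain ⟨v, hv⟩ : ∃ v, (1 - c' * α) * v = 1 := by
          obtain ⟨u, hu'⟩ := hu
          exact ⟨(u⁻¹ : Rˣ), by rw [← hu', Units.mul_inv]⟩
        set γ : R := v * (c' * β) with hγdef
        have hγm : γ ∈ maximalIdeal R := by
          rw [hγdef]
          exact Ideal.mul_mem_left _ _ (Ideal.mul_mem_right _ _ hcm')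
        have hxγ : x = γ * y₀ := by
          calc x = x * 1 := (mul_one x).symm
            _ = x * ((1 - c' * α) * v) := by rw [hv]
            _ = (x * (1 - c' * α)) * v := by ring
            _ = ((c' * β) * y₀) * v := by rw [hxx]
            _ = γ * y₀ := by rw [hγdef]; ring
        have hy₀c : ∀ t, y₀ * t = 0 → t = 0 := by
          intro t ht
          apply hx
          rw [hxγ, show γ * y₀ * t = γ * (y₀ * t) by ring, ht, mul_zero]
        have hγc : ∀ t, γ * t = 0 → t = 0 := by
          intro t ht
          apply hx
          rw [hxγ, show γ * y₀ * t = (γ * t) * y₀ by ring, ht, zero_mul]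
        have hle : maximalIdeal R ≤ Ideal.span {γ} := by
          intro z hz
          obtain ⟨w, hwm, hyw⟩ := hy₀m' z hz
          apply Ideal.mem_span_singleton'.mpr
          refine ⟨w, ?_⟩
          have h0 : y₀ * (z - γ * w) = 0 := by
            calc y₀ * (z - γ * w) = y₀ * z - (γ * y₀) * w := by ring
              _ = x * w - x * w := by rw [hyw, ← hxγ]
              _ = 0 := sub_self _
          have hzz := sub_eq_zero.mp (hy₀c _ h0)
          rw [hzz]; ring
        exact h (mIso hγc hγm hle)
      · have hcu : IsUnit c' := by
          by_contra hq
          exact hcm' ((IsLocalRing.mem_maximalIdeal c').mpr hq)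
        obtain ⟨v, hv⟩ : ∃ v, c' * v = 1 := by
          obtain ⟨u, hu'⟩ := hcu
          exact ⟨(u⁻¹ : Rˣ), by rw [← hu', Units.mul_inv]⟩
        apply hy₀
        apply Ideal.mem_span_singleton'.mpr
        have hb := hdgen y₀ hyI
        refine ⟨(ψ ⟨y₀, hyI⟩ : R) * v, ?_⟩
        have hdvx : d = v * x := by
          calc d = 1 * d := (one_mul d).symm
            _ = (c' * v) * d := by rw [hv]
            _ = v * (c' * d) := by ring
            _ = v * x := by rw [← hxd]
        have harr : (ψ ⟨y₀, hyI⟩ : R) * v * x = (ψ ⟨y₀, hyI⟩ : R) * (v * x) := by ring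
        rw [harr, ← hdvx, ← hb]
    · exact le_maximalIdeal hJne
  -- B is contained in I₀
  have hBI : B ≤ I₀ := by
    intro b hb
    have hdiv' : ∀ j ∈ J', ∃ a, b * j = x * a := by
      intro j hj
      obtain ⟨w, hwm, hbw⟩ := (hmemB b).mp hb j (hJ'm hj)
      exact ⟨w, hbw⟩
    obtain ⟨a, haJ', hba⟩ := trace_absorb hJ'trace hx hdiv' c' hc'J
    obtain ⟨i, hi, hfi⟩ := hsurjJ' a haJ'
    have hxa : x * a = i * c' := by rw [← hfi]; exact hbil' i hi
    have h0 : c' * (b - i) = 0 := by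
      calc c' * (b - i) = b * c' - i * c' := by ring
        _ = x * a - i * c' := by rw [hba]
        _ = 0 := by rw [hxa, sub_self]
    have : b = i := sub_eq_zero.mp (hc' _ h0)
    rwa [this]
  -- m = (c, w₀)
  have hgen : maximalIdeal R = Ideal.span {c, w₀} := by
    apply le_antisymm
    · intro z hz
      obtain ⟨b, hbB, hxz⟩ := hA z hz
      obtain ⟨α, β, hαβ⟩ := Ideal.mem_span_pair.mp (hI₀def ▸ hBI hbB)
      have hxx : x * z = x * (α * c + β * w₀) := by
        calc x * z = b * c := hxz
          _ = (α * x + β * y₀) * c := by rw [hαβ]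
          _ = α * (x * c) + β * (y₀ * c) := by ring
          _ = α * (x * c) + β * (x * w₀) := by rw [← hxw₀]
          _ = x * (α * c + β * w₀) := by ring
      have h0 : x * (z - (α * c + β * w₀)) = 0 := by rw [mul_sub, hxx, sub_self]
      have : z = α * c + β * w₀ := sub_eq_zero.mp (hx _ h0)
      exact Ideal.mem_span_pair.mpr ⟨α, β, this.symm⟩
    · apply Submodule.span_le.mpr
      intro a ha
      rcases ha with rfl | ha
      · exact hcm
      · rcases ha with rfl
        exact hw₀m
  -- Part 2 : the endomorphism ring strictly contains R
  have hpart2 : (1 : Submodule R (FractionRing R)) <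
      (Submodule.map (Algebra.linearMap R (FractionRing R)) (maximalIdeal R)) /
        (Submodule.map (Algebra.linearMap R (FractionRing R)) (maximalIdeal R)) := by
    set Q := FractionRing R
    have hx0 : x ∈ nonZeroDivisors R := by
      rw [mem_nonZeroDivisors_iff_right]
      intro z hzx
      exact hx z (by rwa [mul_comm] at hzx)
    have hux : IsUnit (algebraMap R Q x) :=
      IsLocalization.map_units Q (⟨x, hx0⟩ : nonZeroDivisors R)
    set q : Q := ↑hux.unit⁻¹ * algebraMap R Q y₀ with hqdef
    rw [lt_iff_le_not_ge]
    constructor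
    · rw [Submodule.one_eq_span]
      apply Submodule.span_le.mpr
      intro a ha
      rcases Set.mem_singleton_iff.mp ha with rfl
      rw [SetLike.mem_coe, Submodule.mem_div_iff_forall_mul_mem]
      intro b hb
      rwa [one_mul]
    · intro hcon
      have hqdiv : q ∈ (Submodule.map (Algebra.linearMap R Q) (maximalIdeal R)) /
          (Submodule.map (Algebra.linearMap R Q) (maximalIdeal R)) := by
        rw [Submodule.mem_div_iff_forall_mul_mem]
        rintro b ⟨z, hz, rfl⟩
        obtain ⟨w, hwm, hyz⟩ := hy₀m' z hz
        refine ⟨w, hwm, ?_⟩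
        have hkey : (algebraMap R Q x) * (Algebra.linearMap R Q w)
            = (algebraMap R Q x) * (q * Algebra.linearMap R Q z) := by
          calc (algebraMap R Q x) * (Algebra.linearMap R Q w)
              = algebraMap R Q (x * w) := by
                simp [Algebra.linearMap_apply, map_mul]
            _ = algebraMap R Q (y₀ * z) := by rw [← hyz]
            _ = algebraMap R Q y₀ * algebraMap R Q z := by rw [map_mul]
            _ = ((hux.unit : Q) * ↑hux.unit⁻¹) * (algebraMap R Q y₀ * algebraMap R Q z) := by
                rw [Units.mul_inv, one_mul]
            _ = (algebraMap R Q x) * (q * Algebra.linearMap R Q z) := by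
                rw [hqdef]
                simp only [Algebra.linearMap_apply, IsUnit.unit_spec]
                ring
        exact hux.mul_left_cancel hkey
      have hq1 : q ∈ (1 : Submodule R Q) := hcon hqdiv
      obtain ⟨r, hr⟩ := Submodule.mem_one.mp hq1
      apply hy₀
      apply Ideal.mem_span_singleton'.mpr
      refine ⟨r, ?_⟩
      have hkey2 : algebraMap R Q (r * x) = algebraMap R Q y₀ := by
        calc algebraMap R Q (r * x) = algebraMap R Q x * algebraMap R Q r := by
              rw [map_mul]; ring
          _ = (hux.unit : Q) * q := by rw [hr, IsUnit.unit_spec]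
          _ = ((hux.unit : Q) * ↑hux.unit⁻¹) * algebraMap R Q y₀ := by
              rw [hqdef]; ring
          _ = algebraMap R Q y₀ := by rw [Units.mul_inv, one_mul]
      exact IsFractionRing.injective R Q hkey2
  exact ⟨htr, hpart2, c, w₀, hgen⟩
end

section
/- A commutative noetherian normal domain R satisfies the Lindo–Pande condition (every ideal of R is isomorphic to a trace ideal) if and only if R is a unique factorization domain. -/
universe u

section Aux

variable {R : Type u} [CommRing R]

lemma hom_mul_comm {I : Ideal R} (f : ↥I →ₗ[R] R) {x y : R} (hx : x ∈ I) (hy : y ∈ I) :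
    x * f ⟨y, hy⟩ = y * f ⟨x, hx⟩ := by
  have h1 : x • (⟨y, hy⟩ : ↥I) = y • (⟨x, hx⟩ : ↥I) := Subtype.ext (mul_comm x y)
  have h2 := congrArg f h1
  rwa [map_smul, map_smul, smul_eq_mul, smul_eq_mul] at h2

/-- A trace ideal is stable under all homomorphisms to `R`. -/
lemma isTraceIdeal_stable {J : Ideal R} (hJ : IsTraceIdeal J)
    (f : ↥J →ₗ[R] R) (m : ↥J) : f m ∈ J := by
  obtain ⟨M, _, _, rfl⟩ := hJ
  obtain ⟨y, hy⟩ := m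
  refine Submodule.span_induction
    (p := fun x hx => f ⟨x, hx⟩ ∈ traceIdeal R M) ?_ ?_ ?_ ?_ hy
  · rintro x ⟨g, m0, rfl⟩
    have hg : ∀ m1 : M, g m1 ∈ traceIdeal R M :=
      fun m1 => Submodule.subset_span ⟨g, m1, rfl⟩
    let g' : M →ₗ[R] ↥(traceIdeal R M) := g.codRestrict (traceIdeal R M) hg
    exact Submodule.subset_span ⟨f.comp g', m0, rfl⟩
  · show f 0 ∈ traceIdeal R M
    rw [map_zero]
    exact (traceIdeal R M).zero_mem
  · intro x y hx hy ihx ihy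
    show f (⟨x, hx⟩ + ⟨y, hy⟩) ∈ traceIdeal R M
    rw [map_add]
    exact Submodule.add_mem _ ihx ihy
  · intro c x hx ih
    show f (c • (⟨x, hx⟩ : ↥(traceIdeal R M))) ∈ traceIdeal R M
    rw [map_smul]
    exact Submodule.smul_mem _ c ih

end Aux

section Normal

variable {R : Type u} [CommRing R] [IsDomain R] [IsNoetherianRing R] [IsIntegrallyClosed R]

/-- If `s * φ(J) ⊆ φ(R)` for a nonzero trace ideal `J`, then `s ∈ φ(R)`. -/
lemma exists_eq_algebraMap {J : Ideal R} (hJ : IsTraceIdeal J) (hJ0 : J ≠ ⊥)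
    (s : FractionRing R)
    (h : ∀ z ∈ J, ∃ r : R,
      algebraMap R (FractionRing R) r = s * algebraMap R (FractionRing R) z) :
    ∃ r : R, algebraMap R (FractionRing R) r = s := by
  classical
  have φinj : Function.Injective (algebraMap R (FractionRing R)) :=
    IsFractionRing.injective R (FractionRing R)
  choose r hr using h
  let f : ↥J →ₗ[R] R :=
    { toFun := fun z => r z.1 z.2
      map_add' := by
        intro z w
        apply φinj
        rw [hr, Submodule.coe_add, map_add, map_add, mul_add, hr, hr]
      map_smul' := by
        intro c z
        apply φinj
        simp only [RingHom.id_apply, smul_eq_mul]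
        rw [hr, SetLike.val_smul, smul_eq_mul, map_mul, map_mul, hr]
        ring }
  have hfJ : ∀ z : ↥J, f z ∈ J := isTraceIdeal_stable hJ f
  have hNbot : Submodule.map (Algebra.linearMap R (FractionRing R)) J ≠ ⊥ := by
    obtain ⟨z, hzJ, hz0⟩ := Submodule.exists_mem_ne_zero_of_ne_bot hJ0
    intro hb
    have hmem : algebraMap R (FractionRing R) z ∈
        Submodule.map (Algebra.linearMap R (FractionRing R)) J := ⟨z, hzJ, rfl⟩
    rw [hb, Submodule.mem_bot] at hmem
    exact hz0 (φinj (by simpa using hmem))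
  have hint : IsIntegral R s := by
    refine isIntegral_of_smul_mem_submodule
      (Submodule.map (Algebra.linearMap R (FractionRing R)) J) hNbot
      ((IsNoetherian.noetherian J).map _) s ?_
    rintro n ⟨z, hzJ, rfl⟩
    have heq : s • (Algebra.linearMap R (FractionRing R)) z
        = algebraMap R (FractionRing R) (f ⟨z, hzJ⟩) := by
      simp only [Algebra.linearMap_apply, smul_eq_mul]
      exact (hr z hzJ).symm
    rw [heq]
    exact ⟨f ⟨z, hzJ⟩, hfJ _, rfl⟩
  exact IsIntegrallyClosed.isIntegral_iff.mp hint

end Normal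

/-- A noetherian normal domain satisfies the Lindo–Pande condition iff it is a UFD. -/
theorem normal_domain_LP_iff_ufd (R : Type u) [CommRing R] [IsDomain R]
    [IsNoetherianRing R] [IsIntegrallyClosed R] :
    LP R ↔ UniqueFactorizationMonoid R := by
  classical
  constructor
  · -- LP → UFD
    intro hLP
    have hlcm : ∀ a b : R, ∃ c : R, ∀ d : R, a ∣ d ∧ b ∣ d ↔ c ∣ d := by
      intro a b
      suffices h : ∃ c, Ideal.span {a} ⊓ Ideal.span {b} = Ideal.span {c} by
        obtain ⟨c, hc⟩ := h
        refine ⟨c, fun d => ?_⟩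
        have hmem : a ∣ d ∧ b ∣ d ↔ d ∈ Ideal.span {a} ⊓ Ideal.span {b} := by
          simp [Ideal.mem_span_singleton]
        rw [hmem, hc, Ideal.mem_span_singleton]
      by_cases hab : a * b = 0
      · rcases mul_eq_zero.mp hab with rfl | rfl
        · exact ⟨0, by rw [Ideal.span_singleton_eq_bot.mpr rfl]; simp⟩
        · exact ⟨0, by rw [Ideal.span_singleton_eq_bot.mpr rfl]; simp⟩
      have ha0 : a ≠ 0 := fun h => hab (by rw [h, zero_mul])
      have hb0 : b ≠ 0 := fun h => hab (by rw [h, mul_zero])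
      set I : Ideal R := Ideal.span {a} ⊓ Ideal.span {b} with hIdef
      obtain ⟨J, hJt, ⟨e⟩⟩ := hLP I
      have hx₀I : a * b ∈ I :=
        ⟨Ideal.mem_span_singleton.mpr ⟨b, rfl⟩,
          Ideal.mem_span_singleton.mpr ⟨a, mul_comm a b⟩⟩
      set x₀ := a * b with hx₀def
      let f : ↥I →ₗ[R] R := J.subtype.comp e.toLinearMap
      let g : ↥J →ₗ[R] R := I.subtype.comp e.symm.toLinearMap
      have hf_memJ : ∀ x : ↥I, f x ∈ J := fun x => (e x).2
      have hg_memI : ∀ z : ↥J, g z ∈ I := fun z => (e.symm z).2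
      set t := f ⟨x₀, hx₀I⟩ with htdef
      have htJ : t ∈ J := hf_memJ _
      have ht0 : t ≠ 0 := by
        intro h
        have h1 : e ⟨x₀, hx₀I⟩ = 0 := Subtype.ext h
        have h2 : (⟨x₀, hx₀I⟩ : ↥I) = 0 := by
          have h3 := congrArg e.symm h1
          simpa using h3
        exact hab (congrArg Subtype.val h2)
      have hJ0 : J ≠ ⊥ := fun h => ht0 ((Submodule.mem_bot R).mp (h ▸ htJ))
      -- the fundamental identities
      have F1 : ∀ x (hx : x ∈ I), x₀ * f ⟨x, hx⟩ = x * t := fun x hx =>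
        hom_mul_comm f hx₀I hx
      have hgt : g ⟨t, htJ⟩ = x₀ := by
        have h1 : (⟨t, htJ⟩ : ↥J) = e ⟨x₀, hx₀I⟩ := Subtype.ext rfl
        show (I.subtype) (e.symm ⟨t, htJ⟩) = x₀
        rw [h1, LinearEquiv.symm_apply_apply]
        rfl
      have F2 : ∀ z (hz : z ∈ J), t * g ⟨z, hz⟩ = z * x₀ := by
        intro z hz
        have h4 := hom_mul_comm g htJ hz
        rwa [hgt] at h4
      -- pass to the fraction field
      set K := FractionRing R
      set φ := algebraMap R K with hφ
      have φinj : Function.Injective φ := IsFractionRing.injective R K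
      have φt0 : φ t ≠ 0 := fun h => ht0 (φinj (by simpa using h))
      -- step 1 : t divides x₀, with quotient c
      obtain ⟨c, hc⟩ := exists_eq_algebraMap hJt hJ0 (φ x₀ * (φ t)⁻¹) (by
        intro z hz
        refine ⟨g ⟨z, hz⟩, ?_⟩
        have h1 : φ t * φ (g ⟨z, hz⟩) = φ z * φ x₀ := by
          rw [← map_mul, ← map_mul, F2 z hz]
        field_simp
        linear_combination h1)
      have hct : c * t = x₀ := by
        apply φinj
        rw [map_mul, hc]
        exact inv_mul_cancel_right₀ φt0 _
      -- step 2 : I ≤ span {c}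
      have hIle : I ≤ Ideal.span {c} := by
        intro x hx
        rw [Ideal.mem_span_singleton]
        refine ⟨f ⟨x, hx⟩, ?_⟩
        have h1 := F1 x hx
        rw [← hct] at h1
        have h2 : t * x = t * (c * f ⟨x, hx⟩) := by linear_combination -h1
        exact mul_left_cancel₀ ht0 h2
      -- step 3 : c ∈ I
      have hφc : ∀ z (hz : z ∈ J), φ (g ⟨z, hz⟩) = φ c * φ z := by
        intro z hz
        have h1 : φ t * φ (g ⟨z, hz⟩) = φ z * φ x₀ := by
          rw [← map_mul, ← map_mul, F2 z hz]
        have h2 : φ x₀ = φ c * φ t := by rw [← hct, map_mul]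
        apply mul_left_cancel₀ φt0
        rw [h1, h2]; ring
      have hdvdc : ∀ w : R, w ≠ 0 → I ≤ Ideal.span {w} → w ∣ c := by
        intro w hw0 hIw
        have φw0 : φ w ≠ 0 := fun h => hw0 (φinj (by simpa using h))
        obtain ⟨v, hv⟩ := exists_eq_algebraMap hJt hJ0 (φ c * (φ w)⁻¹) (by
          intro z hz
          have hgI : g ⟨z, hz⟩ ∈ Ideal.span {w} := hIw (hg_memI _)
          obtain ⟨u, hu⟩ := Ideal.mem_span_singleton.mp hgI
          refine ⟨u, ?_⟩
          have h1 := hφc z hz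
          rw [hu, map_mul] at h1
          field_simp
          linear_combination h1)
        refine ⟨v, ?_⟩
        apply φinj
        rw [map_mul, hv]
        rw [mul_comm]; exact (inv_mul_cancel_right₀ φw0 _).symm
      have hcI : c ∈ I :=
        ⟨Ideal.mem_span_singleton.mpr (hdvdc a ha0 inf_le_left),
          Ideal.mem_span_singleton.mpr (hdvdc b hb0 inf_le_right)⟩
      exact ⟨c, le_antisymm hIle ((Ideal.span_singleton_le_iff_mem _).mpr hcI)⟩
    letI : GCDMonoid R := gcdMonoidOfExistsLCM hlcm
    exact ufm_of_decomposition_of_wfDvdMonoid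
  · -- UFD → LP
    intro hUFD I
    letI : StrongNormalizationMonoid R := UniqueFactorizationMonoid.normalizationMonoid
    letI : StrongNormalizedGCDMonoid R := UniqueFactorizationMonoid.toStrongNormalizedGCDMonoid R
    by_cases hI : I = ⊥
    · subst hI
      refine ⟨⊥, ⟨PUnit.{u + 1}, inferInstance, inferInstance, ?_⟩, ⟨LinearEquiv.refl R _⟩⟩
      refine le_antisymm bot_le ?_
      refine Submodule.span_le.mpr ?_
      rintro r ⟨fP, m, rfl⟩
      have hm : m = 0 := Subsingleton.elim _ _
      rw [hm, map_zero]
      exact Submodule.zero_mem ⊥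
    · -- get a finite generating set
      obtain ⟨s, hs⟩ : ∃ s : Finset R, Ideal.span (↑s : Set R) = I := by
        obtain ⟨s, hs⟩ := IsNoetherian.noetherian I
        exact ⟨s, hs⟩
      have hsne : s.Nonempty := by
        rcases s.eq_empty_or_nonempty with h | h
        · exfalso; apply hI; rw [← hs, h]; simp
        · exact h
      set g₀ : R := s.gcd id with hg₀
      obtain ⟨bf, hbf, hbgcd⟩ := Finset.extract_gcd (id : R → R) hsne
      -- some nonzero element of s
      obtain ⟨a₀, ha₀s, ha₀0⟩ : ∃ x ∈ s, x ≠ 0 := by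
        by_contra hcon
        push_neg at hcon
        apply hI
        rw [← hs]
        refine le_antisymm (Ideal.span_le.mpr ?_) bot_le
        intro x hx
        simp [hcon x hx]
      have hg₀0 : g₀ ≠ 0 := by
        intro h
        exact ha₀0 (Finset.gcd_eq_zero_iff.mp (hg₀ ▸ h) a₀ ha₀s)
      set J : Ideal R := Ideal.span (bf '' (↑s : Set R)) with hJdef
      have hx₀J : bf a₀ ∈ J := Ideal.subset_span ⟨a₀, ha₀s, rfl⟩
      have hx₀0 : bf a₀ ≠ 0 := by
        intro h
        apply ha₀0
        have := hbf a₀ ha₀s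
        rw [id_eq] at this
        rw [this, h, mul_zero]
      -- the isomorphism I ≃ J via multiplication by g₀
      let mulg : R →ₗ[R] R := g₀ • LinearMap.id
      have hmulg_inj : Function.Injective mulg := by
        intro x y h
        have : g₀ * x = g₀ * y := by simpa [mulg, smul_eq_mul] using h
        exact mul_left_cancel₀ hg₀0 this
      have hmap : Submodule.map mulg J = I := by
        rw [hJdef]
        show Submodule.map mulg (Submodule.span R (bf '' (↑s : Set R))) = I
        rw [Submodule.map_span, ← hs]
        congr 1
        rw [Set.image_image]
        have : ∀ x ∈ (↑s : Set R), mulg (bf x) = x := by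
          intro x hx
          have h1 := hbf x hx
          rw [id_eq] at h1
          simp [mulg, smul_eq_mul, hg₀, ← h1]
        calc (fun x => mulg (bf x)) '' (↑s : Set R) = id '' (↑s : Set R) := by
              apply Set.image_congr
              intro x hx; rw [this x hx, id_eq]
          _ = (↑s : Set R) := Set.image_id _
      have eIJ : Nonempty (I ≃ₗ[R] J) :=
        ⟨(((Submodule.equivMapOfInjective mulg hmulg_inj J)).trans
          (LinearEquiv.ofEq _ _ hmap)).symm⟩
      refine ⟨J, ⟨↥J, inferInstance, inferInstance, ?_⟩, eIJ⟩
      -- J is its own trace ideal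
      refine le_antisymm ?_ ?_
      · intro x hx
        exact Submodule.subset_span ⟨J.subtype, ⟨x, hx⟩, rfl⟩
      · refine Submodule.span_le.mpr ?_
        rintro r ⟨fJ, m, rfl⟩
        -- every hom J → R is multiplication by a ring element
        have hdvd : bf a₀ ∣ fJ ⟨bf a₀, hx₀J⟩ := by
          have h1 : bf a₀ ∣ s.gcd (fun y => bf y * fJ ⟨bf a₀, hx₀J⟩) := by
            refine Finset.dvd_gcd ?_
            intro y hy
            have hyJ : bf y ∈ J := Ideal.subset_span ⟨y, hy, rfl⟩
            exact ⟨fJ ⟨bf y, hyJ⟩, (hom_mul_comm fJ hx₀J hyJ).symm⟩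
          rw [Finset.gcd_mul_right, hbgcd, one_mul] at h1
          exact h1.trans (normalize_dvd_iff.mpr dvd_rfl)
        obtain ⟨r₀, hr₀⟩ := hdvd
        have hfm : ∀ z : ↥J, fJ z = z.1 * r₀ := by
          intro z
          have h1 : bf a₀ * fJ ⟨z.1, z.2⟩ = z.1 * fJ ⟨bf a₀, hx₀J⟩ :=
            hom_mul_comm fJ hx₀J z.2
          rw [hr₀] at h1
          have h2 : bf a₀ * fJ ⟨z.1, z.2⟩ = bf a₀ * (z.1 * r₀) := by
            rw [h1]; ring
          have h3 := mul_left_cancel₀ hx₀0 h2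
          simpa using h3
        rw [hfm m]
        exact Ideal.mul_mem_right r₀ J m.2
end
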